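/- arXiv:2009.00313 — 5 statements merged into one kernel-verified Lean document; each statement's English description precedes it below -/
import Mathlib

section
/- There exists a subgroup Γ of SL₂(ℤ) of finite index which is not a congruence subgroup; that is, Γ has finite index in SL₂(ℤ), but for every N ≥ 1 the kernel of the reduction homomorphism π_N : SL₂(ℤ) → SL₂(ℤ/Nℤ) is not contained in Γ. -/
open Matrix MatrixGroups

namespace NC
variable {R : Type*} [CommRing R]

/-- upper unipotent `[[1,t],[0,1]]` in `SL(2,R)` -/
def uu (t : R) : SL(2, R) := ⟨!![1, t; 0, 1], by simp [Matrix.det_fin_two_of]⟩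
/-- lower unipotent `[[1,0],[t,1]]` in `SL(2,R)` -/
def ll (t : R) : SL(2, R) := ⟨!![1, 0; t, 1], by simp [Matrix.det_fin_two_of]⟩

@[simp] lemma uu_coe (t : R) : (uu t : Matrix (Fin 2) (Fin 2) R) = !![1, t; 0, 1] := rfl
@[simp] lemma ll_coe (t : R) : (ll t : Matrix (Fin 2) (Fin 2) R) = !![1, 0; t, 1] := rfl

lemma uu_mul (a b : R) : uu a * uu b = uu (a + b) := by
  apply Subtype.ext
  simp [Matrix.SpecialLinearGroup.coe_mul, Matrix.mul_fin_two]
  try ring_nf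

@[simp] lemma uu_zero : uu (0 : R) = 1 := by
  apply Subtype.ext
  simp [Matrix.SpecialLinearGroup.coe_one, Matrix.one_fin_two]

lemma ll_mul (a b : R) : ll a * ll b = ll (a + b) := by
  apply Subtype.ext
  simp [Matrix.SpecialLinearGroup.coe_mul, Matrix.mul_fin_two]
  try ring_nf

@[simp] lemma ll_zero : ll (0 : R) = 1 := by
  apply Subtype.ext
  simp [Matrix.SpecialLinearGroup.coe_one, Matrix.one_fin_two]

lemma uu_inv (t : R) : (uu t)⁻¹ = uu (-t) := by
  apply inv_eq_of_mul_eq_one_right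
  rw [uu_mul]; simp

lemma ll_inv (t : R) : (ll t)⁻¹ = ll (-t) := by
  apply inv_eq_of_mul_eq_one_right
  rw [ll_mul]; simp

lemma uu_pow (t : R) (n : ℕ) : (uu t) ^ n = uu (n * t) := by
  induction n with
  | zero => simp
  | succ k ih => rw [pow_succ, ih, uu_mul]; push_cast; ring_nf

lemma uu_zpow (t : R) (n : ℤ) : (uu t) ^ n = uu (n * t) := by
  cases n with
  | ofNat k => simpa using uu_pow t k
  | negSucc k =>
    rw [zpow_negSucc, uu_pow, uu_inv]
    norm_num
    ring_nf

lemma ll_pow (t : R) (n : ℕ) : (ll t) ^ n = ll (n * t) := by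
  induction n with
  | zero => simp
  | succ k ih => rw [pow_succ, ih, ll_mul]; push_cast; ring_nf

lemma ll_zpow (t : R) (n : ℤ) : (ll t) ^ n = ll (n * t) := by
  cases n with
  | ofNat k => simpa using ll_pow t k
  | negSucc k =>
    rw [zpow_negSucc, ll_pow, ll_inv]
    norm_num
    ring_nf

def fgen : Bool → SL(2, ℤ) := fun b => bif b then uu 2 else ll 2

def ψ : FreeGroup Bool →* SL(2, ℤ) := FreeGroup.lift fgen

def lmat (ℓ : Bool × Bool) : SL(2, ℤ) := cond ℓ.2 (fgen ℓ.1) (fgen ℓ.1)⁻¹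

def act (ℓ : Bool × Bool) (p : ℤ × ℤ) : ℤ × ℤ :=
  if ℓ.1 then (p.1 + (cond ℓ.2 2 (-2)) * p.2, p.2)
  else (p.1, p.2 + (cond ℓ.2 2 (-2)) * p.1)

lemma lmat_act (ℓ : Bool × Bool) (p : ℤ × ℤ) :
    (lmat ℓ : Matrix (Fin 2) (Fin 2) ℤ) *ᵥ ![p.1, p.2] = ![(act ℓ p).1, (act ℓ p).2] := by
  rcases ℓ with ⟨b, s⟩
  funext i
  cases b <;> cases s <;> fin_cases i <;>
    simp [lmat, fgen, act, uu_inv, ll_inv, Matrix.mulVec, dotProduct,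
      Fin.sum_univ_two] <;> ring

def Inv (ℓ : Bool × Bool) (p : ℤ × ℤ) : Prop :=
  3 ≤ p.1.natAbs + p.2.natAbs ∧
  (ℓ.1 = true → p.2.natAbs < p.1.natAbs ∧ p.2 ≠ 0) ∧
  (ℓ.1 = false → p.1.natAbs < p.2.natAbs ∧ p.1 ≠ 0) ∧
  (ℓ.2 = true → (0 ≤ p.1 ∧ 0 ≤ p.2) ∨ (p.1 ≤ 0 ∧ p.2 ≤ 0)) ∧
  (ℓ.2 = false → (0 ≤ p.1 ∧ p.2 ≤ 0) ∨ (p.1 ≤ 0 ∧ 0 ≤ p.2))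

lemma Inv_step (ℓ' ℓ : Bool × Bool) (h : ¬(ℓ.1 = ℓ'.1 ∧ ℓ.2 = !ℓ'.2)) (p : ℤ × ℤ)
    (hp : Inv ℓ' p) : Inv ℓ (act ℓ p) := by
  obtain ⟨b', s'⟩ := ℓ'
  obtain ⟨b, s⟩ := ℓ
  obtain ⟨x, y⟩ := p
  simp only [Inv, act] at hp ⊢
  cases b <;> cases s <;> cases b' <;> cases s' <;> simp_all <;> omega

def init (b : Bool) : ℤ × ℤ := if b then ((0:ℤ), (1:ℤ)) else (1, 0)

lemma Inv_base (ℓ : Bool × Bool) : Inv ℓ (act ℓ (init ℓ.1)) := by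
  obtain ⟨b, s⟩ := ℓ
  cases b <;> cases s <;> simp [Inv, act, init]

lemma key : ∀ (L : List (Bool × Bool)) (hne : L ≠ [])
    (_ : ∀ L₂ L₃ x b, L ≠ L₂ ++ (x, b) :: (x, !b) :: L₃),
    Inv (L.head hne) (L.foldr act (init (L.getLast hne).1)) := by
  intro L
  induction L with
  | nil => intro h; exact absurd rfl h
  | cons ℓ L' ih =>
    intro hne H
    cases L' with
    | nil => simpa using Inv_base ℓ
    | cons ℓ'' t =>
      have H' : ∀ L₂ L₃ x b, (ℓ'' :: t) ≠ L₂ ++ (x, b) :: (x, !b) :: L₃ := by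
        intro L₂ L₃ x b hEq
        exact H (ℓ :: L₂) L₃ x b (by simp [hEq])
      have hne' : (ℓ'' :: t) ≠ [] := by simp
      have step : ¬(ℓ.1 = ℓ''.1 ∧ ℓ.2 = !ℓ''.2) := by
        rintro ⟨h1, h2⟩
        refine H [] t ℓ.1 ℓ.2 ?_
        have : ℓ'' = (ℓ.1, !ℓ.2) := by
          obtain ⟨a1, a2⟩ := ℓ''
          simp only [Prod.mk.injEq]
          constructor
          · exact h1.symm
          · simp at h2 ⊢; cases a2 <;> simp_all
        simp [this]
      have := ih hne' H'
      have hgl : (ℓ :: ℓ'' :: t).getLast hne = (ℓ'' :: t).getLast hne' := by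
        simp [List.getLast_cons]
      rw [hgl]
      have hhd : (ℓ :: ℓ'' :: t).head hne = ℓ := rfl
      rw [hhd]
      have hfr : (ℓ :: ℓ'' :: t).foldr act (init ((ℓ'' :: t).getLast hne').1)
          = act ℓ ((ℓ'' :: t).foldr act (init ((ℓ'' :: t).getLast hne').1)) := rfl
      rw [hfr]
      have hhd' : (ℓ'' :: t).head hne' = ℓ'' := rfl
      rw [hhd'] at this
      exact Inv_step ℓ'' ℓ step _ this



lemma psi_mk_single (ℓ : Bool × Bool) : ψ (FreeGroup.mk [ℓ]) = lmat ℓ := by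
  obtain ⟨b, s⟩ := ℓ
  cases s <;> simp [ψ, FreeGroup.lift_mk, lmat]

lemma bridge (L : List (Bool × Bool)) (p : ℤ × ℤ) :
    (ψ (FreeGroup.mk L) : Matrix (Fin 2) (Fin 2) ℤ) *ᵥ ![p.1, p.2]
      = ![(L.foldr act p).1, (L.foldr act p).2] := by
  induction L generalizing p with
  | nil =>
    rw [← FreeGroup.one_eq_mk, _root_.map_one]
    simp
  | cons ℓ t ih =>
    have : FreeGroup.mk (ℓ :: t) = FreeGroup.mk [ℓ] * FreeGroup.mk t := by
      rw [FreeGroup.mul_mk]; rfl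
    rw [this, _root_.map_mul, Matrix.SpecialLinearGroup.coe_mul, ← Matrix.mulVec_mulVec, ih p,
      psi_mk_single]
    exact lmat_act ℓ (t.foldr act p)

theorem psi_injective : Function.Injective ψ := by
  rw [injective_iff_map_eq_one]
  intro w hw
  by_contra hne1
  set L := w.toWord with hL
  have hLne : L ≠ [] := by
    rw [hL]; exact fun h => hne1 (FreeGroup.toWord_eq_nil_iff.mp h)
  have hred : ∀ L₂ L₃ x b, L ≠ L₂ ++ (x, b) :: (x, !b) :: L₃ := by
    intro L₂ L₃ x b hEq
    have hbad : FreeGroup.reduce L = L₂ ++ (x, b) :: (x, !b) :: L₃ := by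
      rw [hL, FreeGroup.reduce_toWord, ← hL]; exact hEq
    exact FreeGroup.reduce.not hbad
  have hk := key L hLne hred
  have hb := bridge L (init ((L.getLast hLne)).1)
  rw [show FreeGroup.mk L = w from by rw [hL, FreeGroup.mk_toWord], hw] at hb
  simp only [Matrix.SpecialLinearGroup.coe_one, Matrix.one_mulVec] at hb
  set v := init ((L.getLast hLne)).1 with hv
  set F := L.foldr act v with hF
  have h0 : v.1 = F.1 := by
    have := congrFun hb 0; simpa using this
  have h1 : v.2 = F.2 := by
    have := congrFun hb 1; simpa using this
  have hsum : 3 ≤ F.1.natAbs + F.2.natAbs := hk.1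
  have : v.1.natAbs + v.2.natAbs = 1 := by
    rw [hv]; cases (L.getLast hLne).1 <;> simp [init]
  omega


end NC

namespace NC

lemma div_step_pos (a c : ℤ) (hc : 0 < c) (hpar : ¬ (2 ∣ (a - c))) :
    ∃ q : ℤ, (a + 2 * c * q).natAbs < c.natAbs := by
  obtain ⟨d, hd⟩ : ∃ d, a + 2 * c * d = a % (2 * c) :=
    ⟨-(a / (2 * c)), by rw [Int.emod_def]; ring⟩
  have he0 : 0 ≤ a % (2 * c) := Int.emod_nonneg a (by omega)
  have he1 : a % (2 * c) < 2 * c := Int.emod_lt_of_pos a (by omega)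
  have hp2 : (a % (2 * c)) % 2 = a % 2 := Int.emod_emod_of_dvd a ⟨c, by ring⟩
  rcases lt_or_ge (a % (2 * c)) c with h | h
  · exact ⟨d, by rw [hd]; omega⟩
  · refine ⟨d - 1, ?_⟩
    have hd2 : a + 2 * c * (d - 1) = a % (2 * c) - 2 * c := by linear_combination hd
    rw [hd2]; omega

lemma div_step (a c : ℤ) (hc : c ≠ 0) (hpar : ¬ (2 ∣ (a - c))) :
    ∃ q : ℤ, (a + 2 * c * q).natAbs < c.natAbs := by
  rcases lt_or_gt_of_ne hc with h | h
  · obtain ⟨q, hq⟩ := div_step_pos a (-c) (by omega) (by omega)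
    refine ⟨-q, ?_⟩
    have h2 : a + 2 * c * (-q) = a + 2 * (-c) * q := by ring
    rw [h2]
    omega
  · exact div_step_pos a c h hpar

end NC

namespace NC


lemma uu_mem_range (m : ℤ) : uu (2 * m) ∈ ψ.range := by
  refine ⟨FreeGroup.of true ^ m, ?_⟩
  rw [map_zpow, ψ, FreeGroup.lift_apply_of]
  show (uu 2 : SL(2,ℤ)) ^ m = _
  rw [uu_zpow]; congr 1; push_cast; ring

lemma ll_mem_range (m : ℤ) : ll (2 * m) ∈ ψ.range := by
  refine ⟨FreeGroup.of false ^ m, ?_⟩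
  rw [map_zpow, ψ, FreeGroup.lift_apply_of]
  show (ll 2 : SL(2,ℤ)) ^ m = _
  rw [ll_zpow]; congr 1; push_cast; ring

lemma descent_aux : ∀ (n : ℕ) (M : SL(2, ℤ)),
    (M.1 0 0).natAbs + (M.1 1 0).natAbs ≤ n →
    (4 ∣ M.1 0 0 - 1) → (2 ∣ M.1 0 1) → (2 ∣ M.1 1 0) → M ∈ ψ.range := by
  intro n
  induction n with
  | zero =>
    intro M hm h4 _ _
    exfalso
    omega
  | succ n ih =>
    intro M hm h4 hb hc
    have hdet : M.1 0 0 * M.1 1 1 - M.1 0 1 * M.1 1 0 = 1 := by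
      have h2 := M.2
      rwa [Matrix.det_fin_two] at h2
    by_cases hc0 : M.1 1 0 = 0
    · -- upper triangular: M = uu b
      have had : M.1 0 0 * M.1 1 1 = 1 := by
        rw [hc0] at hdet; linear_combination hdet
      have ha1 : M.1 0 0 = 1 ∧ M.1 1 1 = 1 := by
        rcases Int.mul_eq_one_iff_eq_one_or_neg_one.mp had with h | h
        · exact h
        · exfalso; omega
      obtain ⟨m, hbm⟩ := hb
      have hM : M = uu (2 * m) := by
        apply Subtype.ext
        rw [Matrix.eta_fin_two M.1, uu_coe, ha1.1, ha1.2, hc0, hbm]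
      rw [hM]
      exact uu_mem_range m
    · -- c ≠ 0
      have haodd : ¬ (2 ∣ M.1 0 0 - M.1 1 0) := by omega
      rcases Nat.lt_trichotomy (M.1 1 0).natAbs (M.1 0 0).natAbs with hlt | heq | hgt
      · -- |c| < |a| : reduce a
        obtain ⟨q, hq⟩ := div_step (M.1 0 0) (M.1 1 0) hc0 haodd
        set M' := uu (2 * q) * M with hM'
        have hcoe : (M' : Matrix (Fin 2) (Fin 2) ℤ) =
            !![M.1 0 0 + 2 * M.1 1 0 * q, M.1 0 1 + 2 * q * M.1 1 1;
               M.1 1 0, M.1 1 1] := by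
          ext i j
          fin_cases i <;> fin_cases j <;>
            simp [hM', Matrix.SpecialLinearGroup.coe_mul, uu_coe, Matrix.mul_apply,
              Fin.sum_univ_two] <;> ring
        have h00 : M'.1 0 0 = M.1 0 0 + 2 * M.1 1 0 * q := by rw [hcoe]; rfl
        have h01 : M'.1 0 1 = M.1 0 1 + 2 * q * M.1 1 1 := by rw [hcoe]; rfl
        have h10 : M'.1 1 0 = M.1 1 0 := by rw [hcoe]; rfl
        have hmem : M' ∈ ψ.range := by
          apply ih M'
          · rw [h00, h10]; omega
          · rw [h00]
            obtain ⟨k, hk⟩ := h4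
            obtain ⟨c2, hc2⟩ := hc
            exact ⟨k + q * c2, by linear_combination hk + 2 * q * hc2⟩
          · rw [h01]
            obtain ⟨b2, hb2⟩ := hb
            exact ⟨b2 + q * M.1 1 1, by linear_combination hb2⟩
          · rw [h10]; exact hc
        have : M = (uu (2 * q))⁻¹ * M' := by rw [hM', inv_mul_cancel_left]
        rw [this]
        exact Subgroup.mul_mem _ (Subgroup.inv_mem _ (uu_mem_range q)) hmem
      · exfalso; omega
      · -- |a| < |c| : reduce c
        have ha0 : M.1 0 0 ≠ 0 := by omega
        have hcodd : ¬ (2 ∣ M.1 1 0 - M.1 0 0) := by omega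
        obtain ⟨q, hq⟩ := div_step (M.1 1 0) (M.1 0 0) ha0 hcodd
        set M' := ll (2 * q) * M with hM'
        have hcoe : (M' : Matrix (Fin 2) (Fin 2) ℤ) =
            !![M.1 0 0, M.1 0 1;
               M.1 1 0 + 2 * M.1 0 0 * q, M.1 1 1 + 2 * q * M.1 0 1] := by
          ext i j
          fin_cases i <;> fin_cases j <;>
            simp [hM', Matrix.SpecialLinearGroup.coe_mul, ll_coe, Matrix.mul_apply,
              Fin.sum_univ_two] <;> ring
        have h00 : M'.1 0 0 = M.1 0 0 := by rw [hcoe]; rfl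
        have h01 : M'.1 0 1 = M.1 0 1 := by rw [hcoe]; rfl
        have h10 : M'.1 1 0 = M.1 1 0 + 2 * M.1 0 0 * q := by rw [hcoe]; rfl
        have hmem : M' ∈ ψ.range := by
          apply ih M'
          · rw [h00, h10]; omega
          · rw [h00]; exact h4
          · rw [h01]; exact hb
          · rw [h10]
            obtain ⟨c2, hc2⟩ := hc
            exact ⟨c2 + M.1 0 0 * q, by linear_combination hc2⟩
        have : M = (ll (2 * q))⁻¹ * M' := by rw [hM', inv_mul_cancel_left]
        rw [this]
        exact Subgroup.mul_mem _ (Subgroup.inv_mem _ (ll_mem_range q)) hmem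

lemma Gamma4_le_range : CongruenceSubgroup.Gamma 4 ≤ ψ.range := by
  intro M hM
  rw [CongruenceSubgroup.Gamma_mem] at hM
  obtain ⟨h1, h2, h3, _⟩ := hM
  have e1 : ((M.1 0 0 - 1 : ℤ) : ZMod 4) = 0 := by
    push_cast
    rw [show ((M.1 0 0 : ℤ) : ZMod 4) = ((M 0 0 : ℤ) : ZMod 4) from rfl, h1]
    ring
  have e2 : ((M.1 0 1 : ℤ) : ZMod 4) = 0 := h2
  have e3 : ((M.1 1 0 : ℤ) : ZMod 4) = 0 := h3
  have d1 : (4:ℤ) ∣ M.1 0 0 - 1 := (ZMod.intCast_zmod_eq_zero_iff_dvd _ 4).mp e1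
  have d2 : (4:ℤ) ∣ M.1 0 1 := (ZMod.intCast_zmod_eq_zero_iff_dvd _ 4).mp e2
  have d3 : (4:ℤ) ∣ M.1 1 0 := (ZMod.intCast_zmod_eq_zero_iff_dvd _ 4).mp e3
  exact descent_aux ((M.1 0 0).natAbs + (M.1 1 0).natAbs) M le_rfl d1
    (dvd_trans ⟨2, rfl⟩ d2) (dvd_trans ⟨2, rfl⟩ d3)

end NC

namespace NC

variable {R : Type*} [CommRing R]

def aw : FreeGroup Bool := FreeGroup.of true
def bw : FreeGroup Bool := FreeGroup.of false

def dword (i : ℤ) : FreeGroup Bool :=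
  aw ^ i * bw ^ (-i) * aw ^ i * (aw ^ (-(i * i)) * bw ^ (1:ℤ) * aw ^ (-(i * i)))

def wword (i s r : ℤ) : FreeGroup Bool :=
  aw ^ r * (dword i * aw ^ s * (dword i)⁻¹ * (aw ^ s)⁻¹)⁻¹

lemma map_psi_aw_zpow (f : ℤ →+* R) (t : ℤ) :
    Matrix.SpecialLinearGroup.map f (ψ (aw ^ t)) = uu ((t : R) * f 2) := by
  rw [map_zpow, map_zpow, ψ, aw, FreeGroup.lift_apply_of]
  show (Matrix.SpecialLinearGroup.map f (uu 2)) ^ t = _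
  have h : Matrix.SpecialLinearGroup.map f (uu 2) = uu (f 2) := by
    apply Subtype.ext
    rw [Matrix.SpecialLinearGroup.map_apply_coe]
    ext i j
    fin_cases i <;> fin_cases j <;>
      simp [uu, RingHom.mapMatrix_apply, Matrix.map_apply]
  rw [h, uu_zpow]

lemma map_psi_bw_zpow (f : ℤ →+* R) (t : ℤ) :
    Matrix.SpecialLinearGroup.map f (ψ (bw ^ t)) = ll ((t : R) * f 2) := by
  rw [map_zpow, map_zpow, ψ, bw, FreeGroup.lift_apply_of]
  show (Matrix.SpecialLinearGroup.map f (ll 2)) ^ t = _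
  have h : Matrix.SpecialLinearGroup.map f (ll 2) = ll (f 2) := by
    apply Subtype.ext
    rw [Matrix.SpecialLinearGroup.map_apply_coe]
    ext i j
    fin_cases i <;> fin_cases j <;>
      simp [ll, RingHom.mapMatrix_apply, Matrix.map_apply]
  rw [h, ll_zpow]

lemma eval_mod_M (i s r : ℤ) (hs : (s : R) = 0) (hr : (r : R) = 0) :
    Matrix.SpecialLinearGroup.map (Int.castRingHom R) (ψ (wword i s r)) = 1 := by
  have haws : Matrix.SpecialLinearGroup.map (Int.castRingHom R) (ψ (aw ^ s)) = 1 := by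
    rw [map_psi_aw_zpow, hs, zero_mul, uu_zero]
  have hawr : Matrix.SpecialLinearGroup.map (Int.castRingHom R) (ψ (aw ^ r)) = 1 := by
    rw [map_psi_aw_zpow, hr, zero_mul, uu_zero]
  rw [wword]
  simp only [_root_.map_mul, _root_.map_inv, haws, hawr]
  group

lemma eval_mod_Q (i s r : ℤ) (hi : (2 : R) * (i : R) = 1)
    (hs : (3 : R) * (s : R) = 1) (hr : (r : R) = 1) :
    Matrix.SpecialLinearGroup.map (Int.castRingHom R) (ψ (wword i s r)) = 1 := by
  have hf2 : (Int.castRingHom R) (2:ℤ) = (2 : R) := by simp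
  set Φ := Matrix.SpecialLinearGroup.map (n := Fin 2) (Int.castRingHom R) with hΦ
  have hdet : Matrix.det !![(2:R), 0; 0, (i:R)] = 1 := by
    rw [Matrix.det_fin_two_of]; simpa using hi
  set Dm : SL(2, R) := ⟨!![(2:R), 0; 0, (i:R)], hdet⟩ with hDm
  have hD : Φ (ψ (dword i)) = Dm := by
    rw [dword]
    simp only [_root_.map_mul]
    rw [hΦ]
    simp only [map_psi_aw_zpow, map_psi_bw_zpow, hf2]
    apply Subtype.ext
    simp only [Matrix.SpecialLinearGroup.coe_mul, uu_coe, ll_coe, hDm]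
    push_cast
    ext a b
    fin_cases a <;> fin_cases b <;>
      simp [Matrix.mul_apply, Fin.sum_univ_two] <;>
      first
        | ring1
        | linear_combination ((1:R) - 6*(i:R) - 4*(i:R)^2 + 8*(i:R)^3) * hi
        | linear_combination (-4*(i:R) - 4*(i:R)^2 + 16*(i:R)^3 + 8*(i:R)^4 - 16*(i:R)^5) * hi
        | linear_combination ((-2:R) - 2*(i:R) + 4*(i:R)^2) * hi
        | linear_combination ((-1:R) - (i:R) + 6*(i:R)^2 + 4*(i:R)^3 - 8*(i:R)^4) * hi
  have hconj : ∀ t : R, Dm * uu t = uu (4 * t) * Dm := by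
    intro t
    apply Subtype.ext
    simp only [Matrix.SpecialLinearGroup.coe_mul, uu_coe,
      show (Dm : Matrix (Fin 2) (Fin 2) R) = !![(2:R), 0; 0, (i:R)] from rfl]
    ext a b
    fin_cases a <;> fin_cases b <;>
      simp [Matrix.mul_apply, Fin.sum_univ_two] <;>
      first
        | ring1
        | linear_combination (-2*t) * hi
        | linear_combination (2*t) * hi
  have hinner : Dm * uu ((s:R) * 2) * Dm⁻¹ * (uu ((s:R) * 2))⁻¹ = uu 2 := by
    rw [hconj, mul_inv_cancel_right, uu_inv, uu_mul]
    congr 1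
    linear_combination 2 * hs
  have e1 : Φ (ψ (aw ^ r)) = uu (2:R) := by
    rw [hΦ, map_psi_aw_zpow, hf2, hr, one_mul]
  have e2 : Φ (ψ (aw ^ s)) = uu ((s:R) * 2) := by
    rw [hΦ, map_psi_aw_zpow, hf2]
  rw [wword]
  simp only [_root_.map_mul, _root_.map_inv]
  rw [hD, e1, e2, hinner]
  simp

def χ : FreeGroup Bool →* Multiplicative (ZMod 5) :=
  FreeGroup.lift (fun b => bif b then Multiplicative.ofAdd (1 : ZMod 5) else 1)

open scoped commutatorElement in
lemma chi_wword (i s r : ℤ) : χ (wword i s r) = Multiplicative.ofAdd ((r : ZMod 5)) := by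
  have hcomm : dword i * aw ^ s * (dword i)⁻¹ * (aw ^ s)⁻¹ = ⁅dword i, aw ^ s⁆ := rfl
  rw [wword, hcomm, _root_.map_mul, _root_.map_inv, map_commutatorElement,
    commutatorElement_eq_one_iff_commute.mpr (Commute.all _ _), inv_one, mul_one, map_zpow]
  rw [χ, aw, FreeGroup.lift_apply_of]
  show (Multiplicative.ofAdd (1 : ZMod 5)) ^ r = _
  rw [← ofAdd_zsmul, zsmul_eq_mul, mul_one]

lemma cast_one_of_dvd {m n : ℕ} (h : m ∣ n) (x : ℤ) (hx : ((x : ZMod n)) = 1) :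
    ((x : ZMod m)) = 1 := by
  have := congrArg (ZMod.castHom h (ZMod m)) hx
  rwa [map_intCast, _root_.map_one] at this

end NC


namespace NC

-- finite index part
lemma finite_index_part : (Subgroup.map ψ (MonoidHom.ker χ)).FiniteIndex := by
  constructor
  rw [Subgroup.index_map]
  have hker : ψ.ker = ⊥ := (MonoidHom.ker_eq_bot_iff ψ).mpr psi_injective
  rw [hker, sup_bot_eq]
  apply mul_ne_zero
  · exact Subgroup.FiniteIndex.index_ne_zero
  · have hdvd : ψ.range.index ∣ (CongruenceSubgroup.Gamma 4).index :=
      Subgroup.index_dvd_of_le Gamma4_le_range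
    haveI : Finite (SL(2, ZMod 4)) := Subtype.finite
    have h4 : (CongruenceSubgroup.Gamma 4).index ≠ 0 := by
      have hfi : ((Matrix.SpecialLinearGroup.map (n := Fin 2)
          (Int.castRingHom (ZMod 4))).ker).FiniteIndex := inferInstance
      exact hfi.index_ne_zero
    intro h0
    rw [h0] at hdvd
    exact h4 (zero_dvd_iff.mp hdvd)

end NC

namespace NC

lemma entry_dvd_of_map_one {m : ℕ} [NeZero m] (x : SL(2, ℤ))
    (h : Matrix.SpecialLinearGroup.map (Int.castRingHom (ZMod m)) x = 1) :
    (m:ℤ) ∣ x.1 0 0 - 1 ∧ (m:ℤ) ∣ x.1 0 1 ∧ (m:ℤ) ∣ x.1 1 0 ∧ (m:ℤ) ∣ x.1 1 1 - 1 := by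
  have hx : x ∈ CongruenceSubgroup.Gamma m := h
  rw [CongruenceSubgroup.Gamma_mem] at hx
  obtain ⟨h1, h2, h3, h4⟩ := hx
  refine ⟨?_, ?_, ?_, ?_⟩
  · refine (ZMod.intCast_zmod_eq_zero_iff_dvd _ _).mp ?_
    push_cast
    rw [show ((x.1 0 0 : ℤ) : ZMod m) = ((x 0 0 : ℤ) : ZMod m) from rfl, h1]; ring
  · exact (ZMod.intCast_zmod_eq_zero_iff_dvd _ _).mp h2
  · exact (ZMod.intCast_zmod_eq_zero_iff_dvd _ _).mp h3
  · refine (ZMod.intCast_zmod_eq_zero_iff_dvd _ _).mp ?_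
    push_cast
    rw [show ((x.1 1 1 : ℤ) : ZMod m) = ((x 1 1 : ℤ) : ZMod m) from rfl, h4]; ring

lemma mem_gamma_of_dvd {N : ℕ} (x : SL(2, ℤ))
    (h1 : (N:ℤ) ∣ x.1 0 0 - 1) (h2 : (N:ℤ) ∣ x.1 0 1)
    (h3 : (N:ℤ) ∣ x.1 1 0) (h4 : (N:ℤ) ∣ x.1 1 1 - 1) :
    x ∈ CongruenceSubgroup.Gamma N := by
  rw [CongruenceSubgroup.Gamma_mem]
  refine ⟨?_, ?_, ?_, ?_⟩
  · have := (ZMod.intCast_zmod_eq_zero_iff_dvd _ N).mpr h1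
    push_cast at this
    exact sub_eq_zero.mp this
  · exact_mod_cast (ZMod.intCast_zmod_eq_zero_iff_dvd _ N).mpr h2
  · exact_mod_cast (ZMod.intCast_zmod_eq_zero_iff_dvd _ N).mpr h3
  · have := (ZMod.intCast_zmod_eq_zero_iff_dvd _ N).mpr h4
    push_cast at this
    exact sub_eq_zero.mp this

lemma noncong_part (N : ℕ) (hN : 1 ≤ N) :
    ¬ (MonoidHom.ker
        (Matrix.SpecialLinearGroup.map (n := Fin 2) (Int.castRingHom (ZMod N)))
      ≤ Subgroup.map ψ (MonoidHom.ker χ)) := by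
  intro hle
  have hN0 : N ≠ 0 := by omega
  set Q : ℕ := 5 ^ (N.factorization 5) with hQdef
  set Mn : ℕ := N / 5 ^ (N.factorization 5) with hMdef
  have hQM : Q * Mn = N := Nat.ordProj_mul_ordCompl_eq_self N 5
  have h5M : ¬ (5 ∣ Mn) := Nat.not_dvd_ordCompl (by norm_num) hN0
  have hMn0 : Mn ≠ 0 := (Nat.ordCompl_pos 5 hN0).ne'
  have hQ0 : Q ≠ 0 := pow_ne_zero _ (by norm_num)
  haveI : NeZero Q := ⟨hQ0⟩
  haveI : NeZero Mn := ⟨hMn0⟩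
  haveI : NeZero N := ⟨hN0⟩
  haveI : NeZero (5 * Q) := ⟨mul_ne_zero (by norm_num) hQ0⟩
  have hc5M : Nat.Coprime 5 Mn := (Nat.Prime.coprime_iff_not_dvd (by norm_num)).mpr h5M
  have hcQM : Nat.Coprime Q Mn := Nat.Coprime.pow_left _ hc5M
  have hc2Q : Nat.Coprime 2 Q := Nat.Coprime.pow_right _ (by norm_num)
  have hc3Q : Nat.Coprime 3 Q := Nat.Coprime.pow_right _ (by norm_num)
  -- the halving element mod Q
  have hQodd : Q % 2 = 1 := by
    rw [hQdef, Nat.pow_mod]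
    norm_num
  set i2 : ℤ := ((Q : ℤ) + 1) / 2 with hi2def
  have h2i2 : 2 * i2 = (Q : ℤ) + 1 := by omega
  have hi2Q : (2 : ZMod Q) * ((i2 : ℤ) : ZMod Q) = 1 := by
    have h := congrArg (fun z : ℤ => ((z : ZMod Q))) h2i2
    push_cast at h
    rw [ZMod.natCast_self] at h
    simpa using h
  -- s : inverse of 3 mod Q, divisible by Mn
  have hu3 : IsUnit ((3 * Mn : ℕ) : ZMod Q) :=
    (ZMod.isUnit_iff_coprime _ _).mpr (Nat.Coprime.mul hc3Q hcQM.symm)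
  set e3 : ZMod Q := ((hu3.unit⁻¹ : (ZMod Q)ˣ) : ZMod Q) with he3
  set s' : ℤ := (Mn : ℤ) * ((e3.val : ℕ) : ℤ) with hs'def
  have hs3 : (3 : ZMod Q) * ((s' : ℤ) : ZMod Q) = 1 := by
    have hval : ((e3.val : ℕ) : ZMod Q) = e3 := ZMod.natCast_rightInverse e3
    have hcast : ((s' : ℤ) : ZMod Q) = (Mn : ZMod Q) * e3 := by
      rw [hs'def]; push_cast; rw [hval]
    rw [hcast, ← mul_assoc]
    have h3M : (3 : ZMod Q) * (Mn : ZMod Q) = ((3 * Mn : ℕ) : ZMod Q) := by push_cast; ring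
    rw [h3M, he3]
    exact hu3.mul_val_inv
  have hMs' : (Mn : ℤ) ∣ s' := Dvd.intro _ rfl
  -- r : inverse of Mn mod 5Q times Mn
  have hur : IsUnit ((Mn : ℕ) : ZMod (5 * Q)) :=
    (ZMod.isUnit_iff_coprime _ _).mpr (Nat.Coprime.mul_right hc5M.symm hcQM.symm)
  set er : ZMod (5 * Q) := ((hur.unit⁻¹ : (ZMod (5 * Q))ˣ) : ZMod (5 * Q)) with her
  set r : ℤ := (Mn : ℤ) * ((er.val : ℕ) : ℤ) with hrdef
  have hr5Q : ((r : ℤ) : ZMod (5 * Q)) = 1 := by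
    have hval : ((er.val : ℕ) : ZMod (5 * Q)) = er := ZMod.natCast_rightInverse er
    have hcast : ((r : ℤ) : ZMod (5 * Q)) = (Mn : ZMod (5 * Q)) * er := by
      rw [hrdef]; push_cast; rw [hval]
    rw [hcast, her]
    exact hur.mul_val_inv
  have hMr : (Mn : ℤ) ∣ r := Dvd.intro _ rfl
  have hrQ : ((r : ℤ) : ZMod Q) = 1 := cast_one_of_dvd (dvd_mul_left Q 5) r hr5Q
  have hr5 : ((r : ℤ) : ZMod 5) = 1 := cast_one_of_dvd (dvd_mul_right 5 Q) r hr5Q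
  -- the element
  set x : SL(2, ℤ) := ψ (wword i2 s' r) with hx
  have hxQ : Matrix.SpecialLinearGroup.map (Int.castRingHom (ZMod Q)) x = 1 :=
    eval_mod_Q i2 s' r hi2Q hs3 hrQ
  have hxM : Matrix.SpecialLinearGroup.map (Int.castRingHom (ZMod Mn)) x = 1 :=
    eval_mod_M i2 s' r
      ((ZMod.intCast_zmod_eq_zero_iff_dvd _ _).mpr (by exact_mod_cast hMs'))
      ((ZMod.intCast_zmod_eq_zero_iff_dvd _ _).mpr (by exact_mod_cast hMr))
  -- combine via coprimality
  have hco : IsCoprime (Q : ℤ) (Mn : ℤ) := Nat.isCoprime_iff_coprime.mpr hcQM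
  obtain ⟨a1, a2, a3, a4⟩ := entry_dvd_of_map_one x hxQ
  obtain ⟨b1, b2, b3, b4⟩ := entry_dvd_of_map_one x hxM
  have hNQ : (N : ℤ) = (Q : ℤ) * (Mn : ℤ) := by exact_mod_cast hQM.symm
  have hmem : x ∈ CongruenceSubgroup.Gamma N := by
    apply mem_gamma_of_dvd x <;> rw [hNQ]
    · exact hco.mul_dvd a1 b1
    · exact hco.mul_dvd a2 b2
    · exact hco.mul_dvd a3 b3
    · exact hco.mul_dvd a4 b4
  -- x is in the congruence kernel, hence in Γ, contradiction with χ-value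
  have hxΓ : x ∈ Subgroup.map ψ (MonoidHom.ker χ) := hle hmem
  obtain ⟨w', hw'ker, hw'x⟩ := hxΓ
  have hww : w' = wword i2 s' r := psi_injective (by rw [hw'x, hx])
  rw [hww] at hw'ker
  have hχ : χ (wword i2 s' r) = 1 := hw'ker
  rw [chi_wword, hr5] at hχ
  exact (by decide : (Multiplicative.ofAdd (1 : ZMod 5)) ≠ 1) hχ

end NC


/-- There exists a finite-index subgroup of `SL₂(ℤ)` which is not a congruence
subgroup: it contains no kernel of a reduction map `SL₂(ℤ) → SL₂(ℤ/Nℤ)`, `N ≥ 1`. -/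
theorem exists_noncongruence_finite_index_subgroup :
    ∃ Γ : Subgroup SL(2, ℤ), Γ.FiniteIndex ∧
      ∀ N : ℕ, 1 ≤ N →
        ¬ (MonoidHom.ker
            (Matrix.SpecialLinearGroup.map (n := Fin 2) (Int.castRingHom (ZMod N))) ≤ Γ) := by
  exact ⟨Subgroup.map NC.ψ (MonoidHom.ker NC.χ), NC.finite_index_part,
    fun N hN => NC.noncong_part N hN⟩
end

section
/- For every integer m ≥ 1 there is no surjective group homomorphism from SL₂(ℤ/mℤ) onto the symmetric group S₇; that is, S₇ is not a quotient of SL₂(ℤ/mℤ) for any m. -/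
set_option linter.unusedSectionVars false

open Equiv Equiv.Perm Subgroup

private lemma swap_card3 : ∀ a b c : Fin 7, a ≠ b → b ≠ c → a ≠ c →
    (swap a b * swap b c).support.card = 3 := by decide

private lemma swap_card3' : ∀ a b c : Fin 7, a ≠ b → b ≠ c → a ≠ c →
    (swap a c * swap b c).support.card = 3 := by decide

private lemma conj_helper (g τ : Perm (Fin 7)) :
    g⁻¹ * (τ * g * τ⁻¹) = (g⁻¹ * τ * g) * τ⁻¹ := by group

private lemma inv_conj_swap (g : Perm (Fin 7)) (u v : Fin 7) :
    g⁻¹ * swap u v * g = swap (g⁻¹ u) (g⁻¹ v) := by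
  have h := swap_apply_apply g⁻¹ u v
  rw [inv_inv] at h
  exact h.symm

/-- Any nontrivial normal subgroup of `S₇` contains a 3-cycle. -/
lemma exists_three_cycle_mem {N : Subgroup (Perm (Fin 7))} (hN : N.Normal)
    {g : Perm (Fin 7)} (hg : g ∈ N) (hg1 : g ≠ 1) :
    ∃ t ∈ N, IsThreeCycle t := by
  obtain ⟨a, ha⟩ : ∃ a, g a ≠ a := by
    by_contra h; push_neg at h; exact hg1 (Equiv.ext h)
  by_cases hcase : ∃ x, g x ≠ x ∧ g (g x) ≠ x
  · obtain ⟨x, hx1, hx2⟩ := hcase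
    refine ⟨g⁻¹ * (swap (g x) (g (g x)) * g * (swap (g x) (g (g x)))⁻¹),
      N.mul_mem (inv_mem hg) (hN.conj_mem _ hg _), ?_⟩
    rw [← card_support_eq_three_iff, conj_helper, inv_conj_swap, swap_inv,
      Perm.coe_inv, symm_apply_apply, symm_apply_apply]
    exact swap_card3 x (g x) (g (g x)) (Ne.symm hx1)
      (fun h => hx1 (g.injective h).symm) (fun h => hx2 h.symm)
  · push_neg at hcase
    have hg2 : g * g = 1 := by
      apply Equiv.ext; intro x
      by_cases hx : g x = x
      · simp [Perm.mul_apply, hx]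
      · simp [Perm.mul_apply, hcase x hx]
    have hct : ∀ n ∈ g.cycleType, n = 2 := by
      intro n hn
      have h2 : n ∣ 2 := by
        have : n ∣ orderOf g := g.lcm_cycleType ▸ Multiset.dvd_lcm hn
        exact this.trans (orderOf_dvd_iff_pow_eq_one.2 (by rw [pow_two]; exact hg2))
      exact le_antisymm (Nat.le_of_dvd two_pos h2) (two_le_of_mem_cycleType hn)
    obtain ⟨c, hc⟩ : ∃ c, c ∉ g.support := by
      by_contra h
      push_neg at h
      have huniv : g.support = Finset.univ := Finset.eq_univ_iff_forall.2 h
      have h1 : g.cycleType.sum = 7 := by rw [sum_cycleType, huniv]; simp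
      have h2 : g.cycleType.sum = Multiset.card g.cycleType • 2 := by
        conv_lhs => rw [Multiset.eq_replicate_card.2 hct]
        rw [Multiset.sum_replicate]
      rw [h1, smul_eq_mul] at h2
      omega
    have hgc : g c = c := notMem_support.mp hc
    have hac : a ≠ c := fun h => (h ▸ ha) hgc
    have hbc : g a ≠ c := by
      intro h
      have h2 := hcase a ha
      rw [h, hgc] at h2
      exact hac h2.symm
    refine ⟨g⁻¹ * (swap (g a) c * g * (swap (g a) c)⁻¹),
      N.mul_mem (inv_mem hg) (hN.conj_mem _ hg _), ?_⟩
    have h3 : g⁻¹ c = c := by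
      apply g.injective; rw [hgc, Perm.coe_inv, apply_symm_apply]
    rw [← card_support_eq_three_iff, conj_helper, inv_conj_swap, swap_inv,
      h3, Perm.coe_inv, symm_apply_apply]
    exact swap_card3' a (g a) c (Ne.symm ha) hbc hac

/-- Any nontrivial normal subgroup of `S₇` contains `A₇`. -/
lemma alternating_le_of_normal {N : Subgroup (Perm (Fin 7))} (hN : N.Normal)
    (hbot : N ≠ ⊥) : alternatingGroup (Fin 7) ≤ N := by
  obtain ⟨g, hg, hg1⟩ : ∃ g ∈ N, g ≠ 1 := by
    by_contra h
    push_neg at h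
    exact hbot ((Subgroup.eq_bot_iff_forall N).2 h)
  obtain ⟨t, htN, ht⟩ := exists_three_cycle_mem hN hg hg1
  rw [← closure_three_cycles_eq_alternating, Subgroup.closure_le]
  intro σ hσ
  have hconj : IsConj t σ := isConj_iff_cycleType_eq.2 (by rw [ht, hσ])
  obtain ⟨c, hc⟩ := isConj_iff.1 hconj
  rw [← hc]
  exact hN.conj_mem t htN c


open Equiv Equiv.Perm Subgroup Function


private lemma x7_mem : (swap 0 1 * swap 1 2 : Perm (Fin 7)) ∈ alternatingGroup (Fin 7) :=
  IsThreeCycle.mem_alternatingGroup (card_support_eq_three_iff.mp (by decide))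

private lemma y7_mem : (swap 2 3 * swap 3 4 : Perm (Fin 7)) ∈ alternatingGroup (Fin 7) :=
  IsThreeCycle.mem_alternatingGroup (card_support_eq_three_iff.mp (by decide))

private lemma xy_ne_yx : (swap 0 1 * swap 1 2 : Perm (Fin 7)) * (swap 2 3 * swap 3 4)
    ≠ (swap 2 3 * swap 3 4) * (swap 0 1 * swap 1 2) := by decide

/-- S₇ is not the product of two commuting proper normal subgroups:
if a product of two groups surjects onto S₇, one factor already surjects. -/
lemma product_step {G₁ G₂ : Type*} [Group G₁] [Group G₂]
    (h : G₁ × G₂ →* Perm (Fin 7)) (hs : Surjective h) :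
    Surjective (h.comp (MonoidHom.inl G₁ G₂)) ∨ Surjective (h.comp (MonoidHom.inr G₁ G₂)) := by
  set N₁ := (h.comp (MonoidHom.inl G₁ G₂)).range with hN₁
  set N₂ := (h.comp (MonoidHom.inr G₁ G₂)).range with hN₂
  have hnorm₁ : N₁.Normal := by
    constructor
    intro n hn g
    obtain ⟨a, rfl⟩ := hn
    obtain ⟨⟨x, y⟩, rfl⟩ := hs g
    refine ⟨x * a * x⁻¹, ?_⟩
    simp only [MonoidHom.comp_apply, MonoidHom.inl_apply, ← map_mul, ← map_inv]
    congr 1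
    simp [Prod.ext_iff]
  have hnorm₂ : N₂.Normal := by
    constructor
    intro n hn g
    obtain ⟨b, rfl⟩ := hn
    obtain ⟨⟨x, y⟩, rfl⟩ := hs g
    refine ⟨y * b * y⁻¹, ?_⟩
    simp only [MonoidHom.comp_apply, MonoidHom.inr_apply, ← map_mul, ← map_inv]
    congr 1
    simp [Prod.ext_iff]
  by_cases h1 : N₁ = ⊥
  · right
    intro s
    obtain ⟨⟨x, y⟩, rfl⟩ := hs s
    refine ⟨y, ?_⟩
    have hx1 : h (x, 1) = 1 := by
      have : h (x, 1) ∈ N₁ := ⟨x, rfl⟩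
      rwa [h1, Subgroup.mem_bot] at this
    have : (x, y) = (x, 1) * (1, y) := by simp
    simp only [MonoidHom.comp_apply, MonoidHom.inr_apply]
    rw [this, map_mul, hx1, one_mul]
  by_cases h2 : N₂ = ⊥
  · left
    intro s
    obtain ⟨⟨x, y⟩, rfl⟩ := hs s
    refine ⟨x, ?_⟩
    have hy1 : h (1, y) = 1 := by
      have : h (1, y) ∈ N₂ := ⟨y, rfl⟩
      rwa [h2, Subgroup.mem_bot] at this
    have : (x, y) = (x, 1) * (1, y) := by simp
    simp only [MonoidHom.comp_apply, MonoidHom.inl_apply]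
    rw [this, map_mul, hy1, mul_one]
  -- both nontrivial: contradiction with noncommuting elements of A₇
  exfalso
  have hA1 := alternating_le_of_normal hnorm₁ h1
  have hA2 := alternating_le_of_normal hnorm₂ h2
  obtain ⟨a, ha⟩ := hA1 x7_mem
  obtain ⟨b, hb⟩ := hA2 y7_mem
  apply xy_ne_yx
  rw [← ha, ← hb]
  simp only [MonoidHom.comp_apply, MonoidHom.inl_apply, MonoidHom.inr_apply, ← map_mul]
  congr 1
  simp [Prod.ext_iff]

/-- A normal p-subgroup of S₇ is trivial. -/
lemma normal_pgroup_eq_bot {p : ℕ} (hp : p.Prime) {N : Subgroup (Perm (Fin 7))}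
    (hN : N.Normal) (hpg : IsPGroup p N) : N = ⊥ := by
  by_contra hbot
  have hA := alternating_le_of_normal hN hbot
  have hx : (swap 0 1 * swap 1 2 : Perm (Fin 7)) ∈ N := hA x7_mem
  have hy : (swap 0 1 * swap 2 3 : Perm (Fin 7)) ∈ N := hA
    (by rw [mem_alternatingGroup, map_mul, sign_swap (by decide), sign_swap (by decide)]; decide)
  have hp3 : p = 3 := by
    obtain ⟨k, hk⟩ := hpg ⟨_, hx⟩
    have hk' : (swap 0 1 * swap 1 2 : Perm (Fin 7)) ^ p ^ k = 1 := by
      have := congrArg (Subtype.val) hk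
      simpa using this
    have ho : orderOf (swap 0 1 * swap 1 2 : Perm (Fin 7)) = 3 :=
      orderOf_eq_prime (by decide) (by decide)
    have : (3 : ℕ) ∣ p ^ k := ho ▸ orderOf_dvd_of_pow_eq_one hk'
    exact ((Nat.prime_dvd_prime_iff_eq Nat.prime_three hp).mp
      (Nat.prime_three.dvd_of_dvd_pow this)).symm
  have hp2 : p = 2 := by
    obtain ⟨k, hk⟩ := hpg ⟨_, hy⟩
    have hk' : (swap 0 1 * swap 2 3 : Perm (Fin 7)) ^ p ^ k = 1 := by
      have := congrArg (Subtype.val) hk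
      simpa using this
    have ho : orderOf (swap 0 1 * swap 2 3 : Perm (Fin 7)) = 2 :=
      orderOf_eq_prime (by decide) (by decide)
    have : (2 : ℕ) ∣ p ^ k := ho ▸ orderOf_dvd_of_pow_eq_one hk'
    exact ((Nat.prime_dvd_prime_iff_eq Nat.prime_two hp).mp
      (Nat.prime_two.dvd_of_dvd_pow this)).symm
  omega

/-- S₇ is not perfect. -/
lemma s7_not_perfect : ⁅(⊤ : Subgroup (Perm (Fin 7))), (⊤ : Subgroup (Perm (Fin 7)))⁆ ≠ ⊤ := by
  intro htop
  have hle : ⁅(⊤ : Subgroup (Perm (Fin 7))), (⊤ : Subgroup (Perm (Fin 7)))⁆ ≤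
      alternatingGroup (Fin 7) := by
    rw [Subgroup.commutator_le]
    intro g₁ _ g₂ _
    rw [mem_alternatingGroup, commutatorElement_def]
    simp only [map_mul, map_inv]
    rw [mul_comm (sign g₁) (sign g₂)]
    group
  rw [htop] at hle
  have : (swap 0 1 : Perm (Fin 7)) ∈ alternatingGroup (Fin 7) := hle (Subgroup.mem_top _)
  rw [mem_alternatingGroup, sign_swap (by decide)] at this
  exact absurd this (by decide)


open Matrix Matrix.SpecialLinearGroup Function

section Pairing
variable {R S : Type*} [CommRing R] [CommRing S]

/-- entrywise pairing of matrices into a product ring -/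
def pairMat (A : Matrix (Fin 2) (Fin 2) R) (B : Matrix (Fin 2) (Fin 2) S) :
    Matrix (Fin 2) (Fin 2) (R × S) := Matrix.of fun i j => (A i j, B i j)

@[simp] lemma pairMat_apply (A : Matrix (Fin 2) (Fin 2) R) (B : Matrix (Fin 2) (Fin 2) S)
    (i j : Fin 2) : pairMat A B i j = (A i j, B i j) := rfl

lemma pairMat_map_fst (A : Matrix (Fin 2) (Fin 2) R) (B : Matrix (Fin 2) (Fin 2) S) :
    (pairMat A B).map (RingHom.fst R S) = A := by ext i j; simp

lemma pairMat_map_snd (A : Matrix (Fin 2) (Fin 2) R) (B : Matrix (Fin 2) (Fin 2) S) :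
    (pairMat A B).map (RingHom.snd R S) = B := by ext i j; simp

lemma pairMat_det (A : Matrix (Fin 2) (Fin 2) R) (B : Matrix (Fin 2) (Fin 2) S) :
    (pairMat A B).det = (A.det, B.det) := by
  have h1 := (RingHom.fst R S).map_det (pairMat A B)
  have h2 := (RingHom.snd R S).map_det (pairMat A B)
  rw [RingHom.mapMatrix_apply, pairMat_map_fst] at h1
  rw [RingHom.mapMatrix_apply, pairMat_map_snd] at h2
  exact Prod.ext h1.symm h2.symm

lemma pairMat_mul (A A' : Matrix (Fin 2) (Fin 2) R) (B B' : Matrix (Fin 2) (Fin 2) S) :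
    pairMat A B * pairMat A' B' = pairMat (A * A') (B * B') := by
  ext i j
  all_goals simp [Matrix.mul_apply, Prod.fst_sum, Prod.snd_sum]

lemma pairMat_one : pairMat (1 : Matrix (Fin 2) (Fin 2) R) (1 : Matrix (Fin 2) (Fin 2) S) = 1 := by
  ext i j
  all_goals by_cases h : i = j <;> simp [Matrix.one_apply, h]

/-- Pairing of special linear groups over a product ring. -/
def pairSL : (SpecialLinearGroup (Fin 2) R × SpecialLinearGroup (Fin 2) S) →*
    SpecialLinearGroup (Fin 2) (R × S) where
  toFun x := ⟨pairMat x.1.1 x.2.1, by rw [pairMat_det, x.1.2, x.2.2]; rfl⟩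
  map_one' := Subtype.ext (by simp only [SpecialLinearGroup.coe_one]; exact pairMat_one)
  map_mul' x y := Subtype.ext (by
    simp only [SpecialLinearGroup.coe_mul]
    exact (pairMat_mul _ _ _ _).symm)

lemma pairSL_surjective : Surjective (pairSL : _ →* SpecialLinearGroup (Fin 2) (R × S)) := by
  intro z
  refine ⟨(SpecialLinearGroup.map (RingHom.fst R S) z, SpecialLinearGroup.map (RingHom.snd R S) z),
    ?_⟩
  apply Subtype.ext
  show pairMat _ _ = _
  ext i j
  all_goals simp [pairSL]

lemma map_ringEquiv_surjective (e : R ≃+* S) :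
    Surjective (SpecialLinearGroup.map (n := Fin 2) e.toRingHom) := by
  intro y
  refine ⟨SpecialLinearGroup.map (n := Fin 2) e.symm.toRingHom y, ?_⟩
  apply Subtype.ext
  ext i j
  simp

end Pairing

/-- Surjectivity of the reduction `SL₂(ℤ/p^k) → SL₂(ℤ/p)`. -/
lemma reduction_surjective (p : ℕ) (hp : p.Prime) (k : ℕ) (hk : 1 ≤ k) :
    Surjective (SpecialLinearGroup.map (n := Fin 2)
      (ZMod.castHom (dvd_pow_self p (Nat.one_le_iff_ne_zero.mp hk)) (ZMod p))) := by
  haveI : Fact p.Prime := ⟨hp⟩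
  haveI : NeZero (p ^ k) := ⟨pow_ne_zero _ hp.ne_zero⟩
  intro B
  set φ := ZMod.castHom (dvd_pow_self p (Nat.one_le_iff_ne_zero.mp hk)) (ZMod p) with hφ
  set L : Matrix (Fin 2) (Fin 2) (ZMod (p ^ k)) :=
    Matrix.of fun i j => (((B.1 i j).val : ℕ) : ZMod (p ^ k)) with hL
  have hLB : L.map φ = B.1 := by
    ext i j
    simp only [hL, Matrix.map_apply, Matrix.of_apply, map_natCast]
    exact ZMod.natCast_rightInverse (B.1 i j)
  have hdet : φ L.det = 1 := by
    rw [RingHom.map_det, RingHom.mapMatrix_apply, hLB, B.2]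
  have hu : IsUnit L.det := by
    by_contra hnu
    have hval : ((L.det.val : ℕ) : ZMod (p ^ k)) = L.det := ZMod.natCast_rightInverse L.det
    rw [← hval, ZMod.isUnit_iff_coprime] at hnu
    rw [Nat.coprime_pow_right_iff (Nat.lt_of_lt_of_le Nat.zero_lt_one hk)] at hnu
    rw [Nat.coprime_comm, hp.coprime_iff_not_dvd, not_not] at hnu
    have h0 : φ L.det = 0 := by
      rw [← hval, map_natCast, ZMod.natCast_eq_zero_iff]
      exact hnu
    rw [hdet] at h0
    exact one_ne_zero h0
  set U := hu.unit with hU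
  set D : Matrix (Fin 2) (Fin 2) (ZMod (p ^ k)) :=
    Matrix.diagonal ![1, ((U⁻¹ : (ZMod (p ^ k))ˣ) : ZMod (p ^ k))] with hD
  have hdetD : D.det = ((U⁻¹ : (ZMod (p ^ k))ˣ) : ZMod (p ^ k)) := by
    rw [hD, Matrix.det_diagonal, Fin.prod_univ_two]
    simp
  refine ⟨⟨L * D, by rw [Matrix.det_mul, hdetD, ← hu.unit_spec, ← hU, Units.mul_inv]⟩, ?_⟩
  apply Subtype.ext
  show (L * D).map φ = B.1
  rw [Matrix.map_mul]
  have hDφ : D.map φ = 1 := by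
    rw [hD, Matrix.diagonal_map (map_zero φ)]
    have hφU : φ ((U⁻¹ : (ZMod (p ^ k))ˣ) : ZMod (p ^ k)) = 1 := by
      have h1 : Units.map φ.toMonoidHom U = 1 := by
        apply Units.ext
        rw [Units.coe_map]
        show φ ((U : ZMod (p ^ k))) = 1
        rw [hU, hu.unit_spec]
        exact hdet
      calc φ ((U⁻¹ : (ZMod (p ^ k))ˣ) : ZMod (p ^ k))
          = ((Units.map φ.toMonoidHom U⁻¹ : (ZMod p)ˣ) : ZMod p) := by rw [Units.coe_map]; rfl
        _ = (((Units.map φ.toMonoidHom U)⁻¹ : (ZMod p)ˣ) : ZMod p) := by rw [map_inv]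
        _ = 1 := by rw [h1]; rfl
    have hv : (fun m => φ (![1, ((U⁻¹ : (ZMod (p ^ k))ˣ) : ZMod (p ^ k))] m)) =
        ![(1 : ZMod p), 1] := by
      funext i
      fin_cases i <;> simp [hφU]
    rw [hv]
    have : ![(1 : ZMod p), 1] = fun _ => (1 : ZMod p) := by
      funext i; fin_cases i <;> rfl
    rw [this]
    exact Matrix.diagonal_one
  rw [hLB, hDφ, mul_one]


open Matrix Matrix.SpecialLinearGroup Function Finset

section Binomial
variable {T : Type*} [Ring T]

lemma one_add_pow_prime (p : ℕ) (hp : p.Prime) (j : ℕ) (hj : 1 ≤ j) (A : T) :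
    ∃ B : T, (1 + (p : T) ^ j * A) ^ p = 1 + (p : T) ^ (j + 1) * B := by
  have hco : Commute (1 : T) ((p : T) ^ j * A) := Commute.one_left _
  have hpA : Commute ((p : T) ^ j) A := ((Nat.cast_commute p A).pow_left j)
  have key : ∀ m ∈ Finset.range p,
      (1 : T) ^ m * ((p : T) ^ j * A) ^ (p - m) * (p.choose m : T)
      = (p : T) ^ (j + 1) *
        (((p ^ (j * (p - m)) * p.choose m / p ^ (j + 1) : ℕ) : T) * A ^ (p - m)) := by
    intro m hm
    rw [Finset.mem_range] at hm
    have hi1 : 1 ≤ p - m := by omega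
    have hd : p ^ (j + 1) ∣ p ^ (j * (p - m)) * p.choose m := by
      by_cases h2 : 2 ≤ p - m
      · refine dvd_mul_of_dvd_left (pow_dvd_pow p ?_) _
        have h2j : 2 * j ≤ (p - m) * j := Nat.mul_le_mul_right j h2
        have hee : j * (p - m) = (p - m) * j := mul_comm _ _
        omega
      · have hpm : p - m = 1 := by omega
        have hm1 : m = p - 1 := by omega
        have hcc : p.choose m = p := by
          rw [hm1, Nat.choose_symm hp.one_le, Nat.choose_one_right]
        rw [hpm, hcc, mul_one, pow_succ]
    have hmul : (p : ℕ) ^ (j + 1) * (p ^ (j * (p - m)) * p.choose m / p ^ (j + 1))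
        = p ^ (j * (p - m)) * p.choose m := Nat.mul_div_cancel' hd
    rw [one_pow, one_mul, hpA.mul_pow, ← pow_mul]
    rw [mul_assoc, ((Nat.cast_commute (p.choose m) (A ^ (p - m))).symm).eq, ← mul_assoc]
    have h3 : ((p : T) ^ (j * (p - m)) * (p.choose m : T))
        = ((p ^ (j * (p - m)) * p.choose m : ℕ) : T) := by push_cast; ring_nf
    rw [h3]
    have h4 : ((p ^ (j * (p - m)) * p.choose m : ℕ) : T)
        = (p : T) ^ (j + 1) * ((p ^ (j * (p - m)) * p.choose m / p ^ (j + 1) : ℕ) : T) := by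
      rw [← Nat.cast_pow, ← Nat.cast_mul, hmul]
    rw [h4, mul_assoc]
  refine ⟨∑ m ∈ Finset.range p,
    ((p ^ (j * (p - m)) * p.choose m / p ^ (j + 1) : ℕ) : T) * A ^ (p - m), ?_⟩
  rw [hco.add_pow, Finset.sum_range_succ, Finset.sum_congr rfl key, ← Finset.mul_sum]
  simp [add_comm]

lemma one_add_pow_prime_iter (p : ℕ) (hp : p.Prime) (j : ℕ) (hj : 1 ≤ j) (i : ℕ) (A : T) :
    ∃ B : T, (1 + (p : T) ^ j * A) ^ (p ^ i) = 1 + (p : T) ^ (j + i) * B := by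
  induction i generalizing j A with
  | zero => exact ⟨A, by simp⟩
  | succ i IH =>
    obtain ⟨B, hB⟩ := IH j hj A
    obtain ⟨C, hC⟩ := one_add_pow_prime p hp (j + i) (by omega) B
    refine ⟨C, ?_⟩
    rw [pow_succ, pow_mul, hB, hC]
    ring_nf

end Binomial

/-- The kernel of the reduction `SL₂(ℤ/p^k) → SL₂(ℤ/p)` is a p-group. -/
lemma ker_reduction_isPGroup (p : ℕ) (hp : p.Prime) (k : ℕ) (hk : 1 ≤ k) :
    IsPGroup p (MonoidHom.ker (SpecialLinearGroup.map (n := Fin 2)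
      (ZMod.castHom (dvd_pow_self p (Nat.one_le_iff_ne_zero.mp hk)) (ZMod p)))) := by
  haveI : Fact p.Prime := ⟨hp⟩
  haveI : NeZero (p ^ k) := ⟨pow_ne_zero _ hp.ne_zero⟩
  set φ := ZMod.castHom (dvd_pow_self p (Nat.one_le_iff_ne_zero.mp hk)) (ZMod p) with hφ
  intro g
  refine ⟨k - 1, ?_⟩
  set X : Matrix (Fin 2) (Fin 2) (ZMod (p ^ k)) := (g.1 : Matrix (Fin 2) (Fin 2) (ZMod (p ^ k)))
    with hX
  have hker : X.map φ = 1 := by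
    have h := g.2
    rw [MonoidHom.mem_ker] at h
    have := congrArg (Subtype.val) h
    simpa using this
  have hdiv : ∀ x : ZMod (p ^ k), φ x = 0 → ∃ c, x = (p : ZMod (p ^ k)) * c := by
    intro x hx
    rw [ZMod.castHom_apply, ← ZMod.natCast_val, ZMod.natCast_eq_zero_iff] at hx
    obtain ⟨t, ht⟩ := hx
    refine ⟨(t : ZMod (p ^ k)), ?_⟩
    have : ((x.val : ℕ) : ZMod (p ^ k)) = x := ZMod.natCast_rightInverse x
    rw [← this, ht]
    push_cast
    ring
  have hentry : ∀ i j, ∃ c, X i j - (1 : Matrix (Fin 2) (Fin 2) (ZMod (p ^ k))) i j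
      = (p : ZMod (p ^ k)) * c := by
    intro i j
    apply hdiv
    rw [map_sub]
    have h1 : φ (X i j) = (X.map φ) i j := rfl
    rw [h1, hker]
    by_cases h : i = j <;> simp [Matrix.one_apply, h]
  choose C hC using hentry
  set A : Matrix (Fin 2) (Fin 2) (ZMod (p ^ k)) := Matrix.of C with hA
  have hXA : X = 1 + ((p : ℕ) : Matrix (Fin 2) (Fin 2) (ZMod (p ^ k))) ^ 1 * A := by
    rw [pow_one, ← nsmul_eq_mul]
    ext i j
    rw [Matrix.add_apply, Matrix.smul_apply, nsmul_eq_mul]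
    have h := hC i j
    have hAC : A i j = C i j := rfl
    rw [hAC]
    push_cast
    exact sub_eq_iff_eq_add'.mp h
  obtain ⟨B, hB⟩ := one_add_pow_prime_iter (T := Matrix (Fin 2) (Fin 2) (ZMod (p ^ k)))
    p hp 1 le_rfl (k - 1) A
  have hpk0 : ((p : ℕ) : Matrix (Fin 2) (Fin 2) (ZMod (p ^ k))) ^ (1 + (k - 1)) = 0 := by
    have h1 : 1 + (k - 1) = k := by omega
    rw [h1, ← Nat.cast_pow]
    have h2 : ((p ^ k : ℕ) : Matrix (Fin 2) (Fin 2) (ZMod (p ^ k)))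
        = algebraMap (ZMod (p ^ k)) (Matrix (Fin 2) (Fin 2) (ZMod (p ^ k)))
          ((p ^ k : ℕ) : ZMod (p ^ k)) := (map_natCast _ _).symm
    rw [h2, ZMod.natCast_self, map_zero]
  have hXpow : X ^ (p ^ (k - 1)) = 1 := by
    rw [hXA, hB, hpk0, zero_mul, add_zero]
  rw [← Subtype.coe_inj]
  rw [SubgroupClass.coe_pow]
  apply Subtype.ext
  exact (Matrix.SpecialLinearGroup.coe_pow (g : Matrix.SpecialLinearGroup (Fin 2) (ZMod (p ^ k)))
    (p ^ (k - 1))).trans hXpow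


open Matrix Matrix.SpecialLinearGroup Subgroup

variable {F : Type*} [Field F]

open scoped commutatorElement

namespace SL2Perfect

/-- Upper elementary matrix in SL₂. -/
def E (c : F) : SpecialLinearGroup (Fin 2) F :=
  ⟨!![1, c; 0, 1], by simp [Matrix.det_fin_two_of]⟩

/-- Lower elementary matrix in SL₂. -/
def E' (c : F) : SpecialLinearGroup (Fin 2) F :=
  ⟨!![1, 0; c, 1], by simp [Matrix.det_fin_two_of]⟩

/-- Diagonal matrix in SL₂. -/
def Dg (u : F) (hu : u ≠ 0) : SpecialLinearGroup (Fin 2) F :=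
  ⟨!![u, 0; 0, u⁻¹], by simp [Matrix.det_fin_two_of, hu]⟩

lemma E_mul (a b : F) : E a * E b = E (a + b) := by
  apply Subtype.ext
  show (!![1, a; 0, 1] : Matrix (Fin 2) (Fin 2) F) * !![1, b; 0, 1] = !![1, a + b; 0, 1]
  rw [Matrix.mul_fin_two]
  congr 1 <;> ring

lemma E'_mul (a b : F) : E' a * E' b = E' (a + b) := by
  apply Subtype.ext
  show (!![1, 0; a, 1] : Matrix (Fin 2) (Fin 2) F) * !![1, 0; b, 1] = !![1, 0; a + b, 1]
  rw [Matrix.mul_fin_two]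
  congr 1 <;> ring

lemma E_inv (a : F) : (E a)⁻¹ = E (-a) := by
  apply inv_eq_of_mul_eq_one_right
  rw [E_mul]
  apply Subtype.ext
  show (!![1, a + -a; 0, 1] : Matrix (Fin 2) (Fin 2) F) = 1
  simp [← Matrix.one_fin_two]

lemma E'_inv (a : F) : (E' a)⁻¹ = E' (-a) := by
  apply inv_eq_of_mul_eq_one_right
  rw [E'_mul]
  apply Subtype.ext
  show (!![1, 0; a + -a, 1] : Matrix (Fin 2) (Fin 2) F) = 1
  simp [← Matrix.one_fin_two]

lemma Dg_inv (u : F) (hu : u ≠ 0) : (Dg u hu)⁻¹ = Dg u⁻¹ (inv_ne_zero hu) := by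
  apply inv_eq_of_mul_eq_one_right
  apply Subtype.ext
  show (!![u, 0; 0, u⁻¹] : Matrix (Fin 2) (Fin 2) F) * !![u⁻¹, 0; 0, u⁻¹⁻¹] = 1
  rw [Matrix.mul_fin_two, Matrix.one_fin_two]
  congr 1 <;> field_simp <;> simp

lemma comm_E (u : F) (hu : u ≠ 0) (b : F) :
    ⁅Dg u hu, E b⁆ = E ((u ^ 2 - 1) * b) := by
  rw [commutatorElement_def, Dg_inv, E_inv]
  apply Subtype.ext
  show (!![u, 0; 0, u⁻¹] : Matrix (Fin 2) (Fin 2) F) * !![1, b; 0, 1] * !![u⁻¹, 0; 0, u⁻¹⁻¹] *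
    !![1, -b; 0, 1] = !![1, (u ^ 2 - 1) * b; 0, 1]
  rw [Matrix.mul_fin_two, Matrix.mul_fin_two, Matrix.mul_fin_two]
  congr 1 <;> simp [hu] <;> field_simp <;> ring

lemma comm_E' (u : F) (hu : u ≠ 0) (b : F) :
    ⁅Dg u hu, E' b⁆ = E' ((u⁻¹ ^ 2 - 1) * b) := by
  rw [commutatorElement_def, Dg_inv, E'_inv]
  apply Subtype.ext
  show (!![u, 0; 0, u⁻¹] : Matrix (Fin 2) (Fin 2) F) * !![1, 0; b, 1] * !![u⁻¹, 0; 0, u⁻¹⁻¹] *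
    !![1, 0; -b, 1] = !![1, 0; (u⁻¹ ^ 2 - 1) * b, 1]
  rw [Matrix.mul_fin_two, Matrix.mul_fin_two, Matrix.mul_fin_two]
  congr 1 <;> simp [hu] <;> field_simp <;> ring

lemma Dg_decomp (u : F) (hu : u ≠ 0) :
    Dg u hu = E u * E' (-u⁻¹) * E u * E (-1) * E' 1 * E (-1) := by
  apply Subtype.ext
  show (!![u, 0; 0, u⁻¹] : Matrix (Fin 2) (Fin 2) F) =
    !![1, u; 0, 1] * !![1, 0; -u⁻¹, 1] * !![1, u; 0, 1] * !![1, -1; 0, 1] * !![1, 0; 1, 1] *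
      !![1, -1; 0, 1]
  rw [Matrix.mul_fin_two, Matrix.mul_fin_two, Matrix.mul_fin_two, Matrix.mul_fin_two,
    Matrix.mul_fin_two]
  congr 1 <;> field_simp <;> ring

variable (h2 : (2 : F) ≠ 0) (h3 : (3 : F) ≠ 0)

include h2 h3 in
lemma E_mem_comm (c : F) :
    E c ∈ ⁅(⊤ : Subgroup (SpecialLinearGroup (Fin 2) F)), (⊤ : Subgroup (SpecialLinearGroup (Fin 2) F))⁆ := by
  have hkey := comm_E (2 : F) h2 (3⁻¹ * c)
  have : ((2 : F) ^ 2 - 1) * (3⁻¹ * c) = c := by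
    field_simp
    ring
  rw [this] at hkey
  rw [← hkey]
  exact Subgroup.commutator_mem_commutator (Subgroup.mem_top _) (Subgroup.mem_top _)

include h2 h3 in
lemma E'_mem_comm (c : F) :
    E' c ∈ ⁅(⊤ : Subgroup (SpecialLinearGroup (Fin 2) F)), (⊤ : Subgroup (SpecialLinearGroup (Fin 2) F))⁆ := by
  have hne : ((2 : F)⁻¹ ^ 2 - 1) ≠ 0 := by
    intro h
    have : (3 : F) = 0 := by
      field_simp at h
      linear_combination -h
    exact h3 this
  have hkey := comm_E' (2 : F) h2 (((2 : F)⁻¹ ^ 2 - 1)⁻¹ * c)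
  have : ((2 : F)⁻¹ ^ 2 - 1) * (((2 : F)⁻¹ ^ 2 - 1)⁻¹ * c) = c := by
    rw [← mul_assoc, mul_inv_cancel₀ hne, one_mul]
  rw [this] at hkey
  rw [← hkey]
  exact Subgroup.commutator_mem_commutator (Subgroup.mem_top _) (Subgroup.mem_top _)

include h2 h3 in
lemma Dg_mem_comm (u : F) (hu : u ≠ 0) :
    Dg u hu ∈ ⁅(⊤ : Subgroup (SpecialLinearGroup (Fin 2) F)), (⊤ : Subgroup (SpecialLinearGroup (Fin 2) F))⁆ := by
  rw [Dg_decomp]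
  exact Subgroup.mul_mem _ (Subgroup.mul_mem _ (Subgroup.mul_mem _ (Subgroup.mul_mem _
    (Subgroup.mul_mem _ (E_mem_comm h2 h3 u) (E'_mem_comm h2 h3 (-u⁻¹))) (E_mem_comm h2 h3 u))
    (E_mem_comm h2 h3 (-1))) (E'_mem_comm h2 h3 1)) (E_mem_comm h2 h3 (-1))

lemma mem_of_eq_coe (H : Subgroup (SpecialLinearGroup (Fin 2) F))
    (g : SpecialLinearGroup (Fin 2) F) (hg : g ∈ H) (M : Matrix (Fin 2) (Fin 2) F)
    (h : M.det = 1) (he : M = g.1) : (⟨M, h⟩ : SpecialLinearGroup (Fin 2) F) ∈ H := by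
  have : (⟨M, h⟩ : SpecialLinearGroup (Fin 2) F) = g := Subtype.ext he
  rw [this]
  exact hg

include h2 h3 in
/-- SL₂(F) is perfect when 2 ≠ 0 and 3 ≠ 0 in F. -/
theorem sl2_perfect :
    ⁅(⊤ : Subgroup (SpecialLinearGroup (Fin 2) F)), (⊤ : Subgroup (SpecialLinearGroup (Fin 2) F))⁆ = ⊤ := by
  rw [eq_top_iff]
  intro g _
  set H := ⁅(⊤ : Subgroup (SpecialLinearGroup (Fin 2) F)), (⊤ : Subgroup (SpecialLinearGroup (Fin 2) F))⁆ with hH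
  -- prove by the transvection induction principle
  have main : ∀ M : Matrix (Fin 2) (Fin 2) F, ∀ _ : M.det = 1,
      (∃ h : M.det = 1, (⟨M, h⟩ : SpecialLinearGroup (Fin 2) F) ∈ H) := by
    intro M hdet
    apply Matrix.diagonal_transvection_induction
      (P := fun N => ∃ h : N.det = 1, (⟨N, h⟩ : SpecialLinearGroup (Fin 2) F) ∈ H)
    · -- diagonal
      intro D hD
      rw [hdet] at hD
      refine ⟨hD, ?_⟩
      have hD0 : D 0 * D 1 = 1 := by
        rw [← Fin.prod_univ_two D, ← Matrix.det_diagonal]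
        exact hD
      have hD0ne : D 0 ≠ 0 := fun h => one_ne_zero (by rw [← hD0, h, zero_mul])
      have hD1 : D 1 = (D 0)⁻¹ := by
        field_simp
        linear_combination hD0
      have hdiag : Matrix.diagonal D = !![D 0, 0; 0, (D 0)⁻¹] := by
        rw [← hD1]
        ext i j
        fin_cases i <;> fin_cases j <;> simp [Matrix.diagonal]
      have : (⟨Matrix.diagonal D, hD⟩ : SpecialLinearGroup (Fin 2) F) = Dg (D 0) hD0ne :=
        Subtype.ext hdiag
      rw [this]
      exact Dg_mem_comm h2 h3 _ hD0ne
    · -- transvections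
      intro t
      obtain ⟨i, j, hij, c⟩ := t
      fin_cases i <;> fin_cases j
      · exact absurd rfl hij
      · refine ⟨Matrix.TransvectionStruct.det _, ?_⟩
        refine mem_of_eq_coe _ _ (E_mem_comm h2 h3 c) _ _ ?_
        show Matrix.transvection 0 1 c = _
        ext a b
        fin_cases a <;> fin_cases b <;>
          simp [Matrix.transvection, Matrix.single, E]
      · refine ⟨Matrix.TransvectionStruct.det _, ?_⟩
        refine mem_of_eq_coe _ _ (E'_mem_comm h2 h3 c) _ _ ?_
        show Matrix.transvection 1 0 c = _
        ext a b
        fin_cases a <;> fin_cases b <;>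
          simp [Matrix.transvection, Matrix.single, E']
      · exact absurd rfl hij
    · -- multiplication
      intro A B hPA hPB
      obtain ⟨hA, hAm⟩ := hPA
      obtain ⟨hB, hBm⟩ := hPB
      refine ⟨by rw [Matrix.det_mul, hA, hB, one_mul], ?_⟩
      exact Subgroup.mul_mem H hAm hBm
  obtain ⟨h, hm⟩ := main g.1 g.2
  have : (⟨g.1, h⟩ : SpecialLinearGroup (Fin 2) F) = g := Subtype.ext rfl
  rwa [this] at hm

end SL2Perfect


open Matrix Equiv Function Subgroup

set_option maxHeartbeats 1000000 in
/-- For every `m ≥ 1` there is no surjective group homomorphism from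
`SL₂(ℤ/mℤ)` onto the symmetric group `S₇`. -/
theorem no_surjection_SL2_ZMod_onto_S7 (m : ℕ) (hm : 1 ≤ m) :
    ∀ f : Matrix.SpecialLinearGroup (Fin 2) (ZMod m) →* Equiv.Perm (Fin 7),
      ¬ Function.Surjective f := by
  induction m using Nat.strong_induction_on with
  | _ m IH =>
    intro f hf
    by_cases hm1 : m = 1
    · subst hm1
      obtain ⟨x, hx⟩ := hf (Equiv.swap 0 1)
      have hx1 : x = 1 := Subtype.ext (Subsingleton.elim _ _)
      rw [hx1, _root_.map_one] at hx
      exact absurd hx.symm (by decide)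
    · have hm2 : 2 ≤ m := by omega
      have hp : m.minFac.Prime := Nat.minFac_prime hm1
      set p := m.minFac with hp_def
      haveI : Fact p.Prime := ⟨hp⟩
      haveI : NeZero p := ⟨hp.ne_zero⟩
      set k := m.factorization p with hk_def
      set n := m / p ^ k with hn_def
      have hdvd : p ∣ m := Nat.minFac_dvd m
      have hm0 : m ≠ 0 := by omega
      have hk1 : 1 ≤ k := hp.factorization_pos_of_dvd hm0 hdvd
      have hmn : p ^ k * n = m := Nat.ordProj_mul_ordCompl_eq_self m p
      have hn1 : 1 ≤ n := Nat.ordCompl_pos p hm0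
      have hpk2 : 2 ≤ p ^ k := le_trans hp.two_le (Nat.le_self_pow (by omega) p)
      have hnm : n < m := by
        calc n < 2 * n := by omega
          _ ≤ p ^ k * n := Nat.mul_le_mul_right n hpk2
          _ = m := hmn
      have hco : Nat.Coprime (p ^ k) n := (Nat.coprime_ordCompl hp hm0).pow_left k
      have e : ZMod m ≃+* ZMod (p ^ k) × ZMod n := by
        rw [← hmn]; exact ZMod.chineseRemainder hco
      set F2 := (f.comp (Matrix.SpecialLinearGroup.map (n := Fin 2) e.symm.toRingHom)).comp
        (pairSL (R := ZMod (p ^ k)) (S := ZMod n)) with hF2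
      have hsurj2 : Surjective F2 := by
        rw [hF2]
        intro s
        obtain ⟨a, ha⟩ := hf s
        obtain ⟨b, hb⟩ := map_ringEquiv_surjective e.symm a
        obtain ⟨c, hc⟩ := pairSL_surjective b
        exact ⟨c, by rw [MonoidHom.comp_apply, MonoidHom.comp_apply, hc, hb, ha]⟩
      rcases product_step F2 hsurj2 with hleft | hright
      · -- SL₂(ℤ/p^k) surjects onto S₇
        set π := Matrix.SpecialLinearGroup.map (n := Fin 2)
          (ZMod.castHom (dvd_pow_self p (Nat.one_le_iff_ne_zero.mp hk1)) (ZMod p)) with hπ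
        set F3 := F2.comp (MonoidHom.inl _ _) with hF3
        have hker : π.ker ≤ F3.ker := by
          have hpg := ker_reduction_isPGroup p hp k hk1
          have hmap : (Subgroup.map F3 π.ker) = ⊥ :=
            normal_pgroup_eq_bot hp ((MonoidHom.normal_ker π).map F3 hleft) (hpg.map F3)
          intro x hx
          have hx2 : F3 x ∈ Subgroup.map F3 π.ker := ⟨x, hx, rfl⟩
          rw [hmap, Subgroup.mem_bot] at hx2
          exact hx2
        have hπs : Surjective π := reduction_surjective p hp k hk1
        set F4 := (π.liftOfRightInverse (surjInv hπs) (rightInverse_surjInv hπs)) ⟨F3, hker⟩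
          with hF4def
        have hF4 : ∀ x, F4 (π x) = F3 x := fun x =>
          π.liftOfRightInverse_comp_apply _ _ ⟨F3, hker⟩ x
        have hF4s : Surjective F4 := by
          intro s
          obtain ⟨x, hx⟩ := hleft s
          exact ⟨π x, by rw [hF4]; exact hx⟩
        by_cases hp5 : 5 ≤ p
        · -- perfect case
          have h2 : (2 : ZMod p) ≠ 0 := by
            have h2' : ((2 : ℕ) : ZMod p) ≠ 0 := by
              rw [Ne, ZMod.natCast_eq_zero_iff]
              intro hd
              have := Nat.le_of_dvd (by norm_num) hd
              omega
            simpa using h2'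
          have h3 : (3 : ZMod p) ≠ 0 := by
            have h3' : ((3 : ℕ) : ZMod p) ≠ 0 := by
              rw [Ne, ZMod.natCast_eq_zero_iff]
              intro hd
              have := Nat.le_of_dvd (by norm_num) hd
              omega
            simpa using h3'
          have hperf := SL2Perfect.sl2_perfect (F := ZMod p) h2 h3
          apply s7_not_perfect
          have htop : Subgroup.map F4 ⊤ = ⊤ := by
            rw [← MonoidHom.range_eq_map]
            exact MonoidHom.range_eq_top.2 hF4s
          calc ⁅(⊤ : Subgroup (Perm (Fin 7))), (⊤ : Subgroup (Perm (Fin 7)))⁆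
              = ⁅Subgroup.map F4 ⊤, Subgroup.map F4 ⊤⁆ := by rw [htop]
            _ = Subgroup.map F4 ⁅⊤, ⊤⁆ := (Subgroup.map_commutator (H₁ := ⊤) ⊤ F4).symm
            _ = Subgroup.map F4 ⊤ := by rw [hperf]
            _ = ⊤ := htop
        · -- small prime case: cardinality
          have hple : p ≤ 3 := by
            by_contra hgt
            have hp4 : p = 4 := by omega
            rw [hp4] at hp
            exact absurd hp (by decide)
          have hcard : Fintype.card (Equiv.Perm (Fin 7)) ≤
              Fintype.card (Matrix.SpecialLinearGroup (Fin 2) (ZMod p)) :=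
            Fintype.card_le_of_surjective F4 hF4s
          have h5040 : Fintype.card (Equiv.Perm (Fin 7)) = 5040 := by
            rw [Fintype.card_perm, Fintype.card_fin]
            decide
          have hinj : Function.Injective
              (fun (g : Matrix.SpecialLinearGroup (Fin 2) (ZMod p)) =>
                (fun i j => g.1 i j : Fin 2 → Fin 2 → ZMod p)) := by
            intro a b hab
            apply Subtype.ext
            ext i j
            exact congrFun (congrFun hab i) j
          have hcard2 : Fintype.card (Matrix.SpecialLinearGroup (Fin 2) (ZMod p)) ≤
              Fintype.card (Fin 2 → Fin 2 → ZMod p) := Fintype.card_le_of_injective _ hinj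
          have hcard3 : Fintype.card (Fin 2 → Fin 2 → ZMod p) = (p ^ 2) ^ 2 := by
            rw [Fintype.card_fun, Fintype.card_fun, ZMod.card, Fintype.card_fin]
          have : (p ^ 2) ^ 2 ≤ 81 := by
            have h9 := Nat.pow_le_pow_left (Nat.pow_le_pow_left hple 2) 2
            norm_num at h9
            omega
          omega
      · -- SL₂(ℤ/n) surjects onto S₇; induction
        exact IH n hnm hn1 _ hright
end

section
/- For every prime p ≥ 5, the projective special linear group PSL₂(ℤ/pℤ), i.e. the quotient of SL₂(ℤ/pℤ) by its center, is a simple group. -/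
open Matrix

namespace PSLaux

variable {p : ℕ}

abbrev SL2 (p : ℕ) := Matrix.SpecialLinearGroup (Fin 2) (ZMod p)

def mk2 (a b c d : ZMod p) (h : a * d - b * c = 1) : SL2 p :=
  ⟨!![a, b; c, d], by rw [Matrix.det_fin_two_of]; exact h⟩

lemma mk2_eq {a b c d a' b' c' d' : ZMod p} {h h'} (h1 : a = a') (h2 : b = b')
    (h3 : c = c') (h4 : d = d') : mk2 a b c d h = mk2 a' b' c' d' h' := by
  subst h1 h2 h3 h4; rfl

lemma mk2_mul (a b c d a' b' c' d' : ZMod p) (h h') :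
    (mk2 a b c d h) * (mk2 a' b' c' d' h') =
      mk2 (a*a'+b*c') (a*b'+b*d') (c*a'+d*c') (c*b'+d*d')
        (by rw [show (a*a'+b*c')*(c*b'+d*d') - (a*b'+b*d')*(c*a'+d*c')
              = (a*d-b*c)*(a'*d'-b'*c') from by ring, h, h', one_mul]) := by
  apply Subtype.ext
  show !![a, b; c, d] * !![a', b'; c', d'] = _
  simp [mk2, Matrix.mul_fin_two]

lemma mk2_eta (A : SL2 p) :
    A = mk2 (A.1 0 0) (A.1 0 1) (A.1 1 0) (A.1 1 1)
      (by have := A.2; rwa [Matrix.det_fin_two] at this) := by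
  apply Subtype.ext
  exact Matrix.eta_fin_two A.1

def Lm (x : ZMod p) : SL2 p := mk2 1 0 x 1 (by ring)
def Um (x : ZMod p) : SL2 p := mk2 1 x 0 1 (by ring)

lemma Lm_zero : Lm (0 : ZMod p) = 1 := by
  apply Subtype.ext
  show !![1,0;(0:ZMod p),1] = _
  rw [Matrix.SpecialLinearGroup.coe_one, Matrix.one_fin_two]

lemma Lm_mul (x y : ZMod p) : Lm x * Lm y = Lm (x + y) := by
  rw [Lm, Lm, mk2_mul]; exact mk2_eq (by ring) (by ring) (by ring) (by ring)

lemma Lm_pow (x : ZMod p) (n : ℕ) : Lm x ^ n = Lm ((n : ZMod p) * x) := by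
  induction n with
  | zero => simp only [pow_zero, Nat.cast_zero, zero_mul, Lm_zero]
  | succ n ih => rw [pow_succ, ih, Lm_mul]; exact congrArg _ (by push_cast; ring)

end PSLaux

namespace PSLaux

variable {p : ℕ} [Fact p.Prime] {N : Subgroup (SL2 p)} (hN : N.Normal)

/-- diagonal conj: diag(d,d') * Lm x * diag(d,d')⁻¹ = Lm (d'*d'*x) -/
lemma all_Lm (lam : ZMod p) (hl : lam ≠ 0) (hmem : Lm lam ∈ N) (x : ZMod p) :
    Lm x ∈ N := by
  have : Lm x = Lm lam ^ ((x * lam⁻¹).val) := by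
    rw [Lm_pow]
    refine congrArg _ ?_
    rw [ZMod.natCast_val, ZMod.cast_id]
    field_simp
  rw [this]
  exact pow_mem hmem _

include hN in
lemma all_Um (lam : ZMod p) (hl : lam ≠ 0) (hmem : Lm lam ∈ N) (x : ZMod p) :
    Um x ∈ N := by
  have hL : Lm (-x) ∈ N := all_Lm lam hl hmem _
  have key : (mk2 0 1 (-1) 0 (by ring)) * Lm (-x) * (mk2 0 1 (-1) 0 (by ring))⁻¹ = Um x := by
    rw [mul_inv_eq_iff_eq_mul, Lm, Um, mk2_mul, mk2_mul]
    exact mk2_eq (by ring) (by ring) (by ring) (by ring)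
  rw [← key]
  exact hN.conj_mem _ hL _

include hN in
lemma mem_of_c_ne {A : SL2 p} (hU : ∀ x, Um x ∈ N) (hL : ∀ x, Lm x ∈ N)
    (hc : A.1 1 0 ≠ 0) : A ∈ N := by
  set a := A.1 0 0; set b := A.1 0 1; set c := A.1 1 0; set d := A.1 1 1
  have hdet : a * d - b * c = 1 := by
    have := A.2; rwa [Matrix.det_fin_two] at this
  have : A = Um ((a-1) * c⁻¹) * Lm c * Um ((d-1) * c⁻¹) := by
    rw [mk2_eta A, Um, Lm, Um, mk2_mul, mk2_mul]
    refine mk2_eq ?_ ?_ ?_ ?_ <;> field_simp <;>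
      first
        | ring1
        | linear_combination hdet
        | linear_combination -hdet
        | linear_combination 2*hdet
        | linear_combination (-2)*hdet
        | linear_combination c*hdet
        | linear_combination (-c)*hdet
  rw [this]
  exact mul_mem (mul_mem (hU _) (hL _)) (hU _)

include hN in
lemma N_eq_top (hU : ∀ x, Um x ∈ N) (hL : ∀ x, Lm x ∈ N) : N = ⊤ := by
  ext A
  simp only [Subgroup.mem_top, iff_true]
  by_cases hc : A.1 1 0 ≠ 0
  · exact mem_of_c_ne hN hU hL hc
  · push_neg at hc
    have hdet : A.1 0 0 * A.1 1 1 - A.1 0 1 * A.1 1 0 = 1 := by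
      have := A.2; rwa [Matrix.det_fin_two] at this
    have hd : A.1 1 1 ≠ 0 := by
      intro h; rw [hc, h] at hdet; simp at hdet
    have h2 : (A * Lm 1).1 1 0 ≠ 0 := by
      have : (A * Lm 1).1 = A.1 * !![1,0;1,1] := rfl
      rw [this, Matrix.eta_fin_two A.1, Matrix.mul_fin_two]
      simpa [hc] using hd
    have hmem : A * Lm 1 ∈ N := mem_of_c_ne hN hU hL h2
    have : A = (A * Lm 1) * Lm (-1) := by
      rw [mul_assoc, Lm_mul]; simp [Lm_zero]
    rw [this]
    exact mul_mem hmem (hL _)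

end PSLaux

namespace PSLaux

variable {p : ℕ} [Fact p.Prime] {N : Subgroup (SL2 p)} (hN : N.Normal)

include hN in
/-- From a lower-triangular element of N, extract a nonzero transvection. -/
lemma from_P (a e a' : ZMod p) (ha : a * a' = 1) (hodd : (2 : ZMod p) ≠ 0)
    (hP : mk2 a 0 e a' (by rw [← ha]; ring) ∈ N)
    (hcond : a' * a' = 1 → e ≠ 0) :
    ∃ mu : ZMod p, mu ≠ 0 ∧ Lm mu ∈ N := by
  have ha'0 : a' ≠ 0 := by
    intro h; rw [h, mul_zero] at ha; exact zero_ne_one ha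
  have haeq : a = a'⁻¹ := by
    rw [← one_mul a'⁻¹, ← ha, mul_assoc, mul_inv_cancel₀ ha'0, mul_one]
  by_cases h1 : a' * a' = 1
  · have haa : a = a' := by
      have : a = a * (a' * a') := by rw [h1, mul_one]
      rw [this, ← mul_assoc, ha, one_mul]
    refine ⟨e * (a + a'), ?_, ?_⟩
    · have : a + a' = 2 * a' := by rw [haa]; ring
      rw [this]
      exact mul_ne_zero (hcond h1) (mul_ne_zero hodd ha'0)
    · have : mk2 a 0 e a' (by rw [← ha]; ring) * mk2 a 0 e a' (by rw [← ha]; ring)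
          = Lm (e * (a + a')) := by
        rw [mk2_mul, Lm]
        refine mk2_eq ?_ ?_ ?_ ?_
        · rw [haa]; linear_combination h1
        · ring
        · ring
        · linear_combination h1
      rw [← this]
      exact mul_mem hP hP
  · refine ⟨a' * a' - 1, sub_ne_zero.mpr h1, ?_⟩
    set P : SL2 p := mk2 a 0 e a' (by rw [← ha]; ring) with hPdef
    have key : P * (Lm 1 * P⁻¹ * (Lm 1)⁻¹) = Lm (a' * a' - 1) := by
      rw [show P * (Lm 1 * P⁻¹ * (Lm 1)⁻¹) = ((P * Lm 1) * P⁻¹) * (Lm 1)⁻¹ from by group]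
      rw [mul_inv_eq_iff_eq_mul, mul_inv_eq_iff_eq_mul]
      rw [hPdef, Lm, Lm, mk2_mul, mk2_mul, mk2_mul]
      subst haeq
      refine mk2_eq ?_ ?_ ?_ ?_ <;> field_simp <;> ring
    rw [← key]
    exact mul_mem hP (hN.conj_mem _ (inv_mem hP) _)


include hN in
/-- Conjugating a matrix with nonzero lower-left entry into companion-like form. -/
lemma comp {A : SL2 p} (hA : A ∈ N) (hc : A.1 1 0 ≠ 0) :
    mk2 0 (-(A.1 1 0)⁻¹) (A.1 1 0) (A.1 0 0 + A.1 1 1)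
      (by field_simp; ring) ∈ N := by
  set a := A.1 0 0; set b := A.1 0 1; set c := A.1 1 0; set d := A.1 1 1
  have hdet : a * d - b * c = 1 := by
    have := A.2; rwa [Matrix.det_fin_two] at this
  set g : SL2 p := Um (-(a * c⁻¹)) with hg
  have key : g * A * g⁻¹ = mk2 0 (-c⁻¹) c (a + d) (by field_simp; ring) := by
    rw [mul_inv_eq_iff_eq_mul]
    rw [mk2_eta A, hg, Um, mk2_mul, mk2_mul]
    refine mk2_eq ?_ ?_ ?_ ?_ <;> field_simp <;>
      first
        | ring1
        | linear_combination hdet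
        | linear_combination -hdet
        | linear_combination c * hdet
        | linear_combination (-c) * hdet
  rw [← key]
  exact hN.conj_mem _ hA _

include hN in
/-- companion with nonzero trace gives a transvection (needs 4 ≠ 1, i.e. p ≠ 3). -/
lemma tr_ne {u v t : ZMod p} (huv : u * v = 1) (hodd : (2 : ZMod p) ≠ 0)
    (h41 : (4 : ZMod p) ≠ 1) (ht : t ≠ 0)
    (hC : mk2 0 (-u) v t (by linear_combination huv) ∈ N) :
    ∃ mu : ZMod p, mu ≠ 0 ∧ Lm mu ∈ N := by
  set C : SL2 p := mk2 0 (-u) v t (by linear_combination huv) with hCdef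
  set D : SL2 p := mk2 2 0 0 (2⁻¹ : ZMod p) (by field_simp; ring) with hD
  have h20 : (2 : ZMod p) ≠ 0 := hodd
  -- P = (D * C * D⁻¹) * C⁻¹
  have key : D * C * D⁻¹ * C⁻¹
      = mk2 4 0 (t * v * (2⁻¹ * 2⁻¹ - 1)) (2⁻¹ * 2⁻¹)
        (by field_simp; ring) := by
    rw [mul_inv_eq_iff_eq_mul, mul_inv_eq_iff_eq_mul]
    rw [hCdef, hD, mk2_mul, mk2_mul, mk2_mul]
    have hv : v ≠ 0 := by
      intro h; rw [h, mul_zero] at huv; exact zero_ne_one huv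
    have hueq : u = v⁻¹ := by
      rw [← one_mul v⁻¹, ← huv, mul_assoc, mul_inv_cancel₀ hv, mul_one]
    subst hueq
    have h32 : (32 : ZMod p) ≠ 0 := by
      have := pow_ne_zero 5 hodd
      norm_num at this
      exact this
    refine mk2_eq ?_ ?_ ?_ ?_ <;> field_simp [h32] <;>
      first
        | ring1
        | (rw [eq_div_iff (by first
            | exact mul_ne_zero (mul_ne_zero (mul_ne_zero (mul_ne_zero hodd hodd) hv)
                (mul_ne_zero hodd hodd)) hodd
            | simp [hv, hodd])]
           ring1)
  have hPmem : D * C * D⁻¹ * C⁻¹ ∈ N := by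
    exact mul_mem (hN.conj_mem _ hC _) (inv_mem hC)
  rw [key] at hPmem
  have h44 : (4 : ZMod p) * (2⁻¹ * 2⁻¹) = 1 := by
    field_simp
    ring
  refine from_P hN 4 (t * v * (2⁻¹ * 2⁻¹ - 1)) (2⁻¹ * 2⁻¹) h44 hodd hPmem ?_
  · intro _
    have hv : v ≠ 0 := by
      intro h; rw [h, mul_zero] at huv; exact zero_ne_one huv
    have h4 : (2⁻¹ * 2⁻¹ : ZMod p) - 1 ≠ 0 := by
      intro h
      apply h41
      have : (4 : ZMod p) * (2⁻¹ * 2⁻¹) = 4 * 1 := by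
        rw [show (2⁻¹ * 2⁻¹ : ZMod p) = 1 from by linear_combination h]
      rw [h44] at this
      rw [mul_one] at this
      exact this.symm
    exact mul_ne_zero (mul_ne_zero ht hv) h4


lemma lit_ne_zero (n : ℕ) (hn : ¬ p ∣ n) : ((n : ℕ) : ZMod p) ≠ 0 := by
  rwa [Ne, ZMod.natCast_eq_zero_iff]

include hN in
lemma key_c (hp2 : (2 : ZMod p) ≠ 0) (hp3 : (2 : ZMod p) + 1 ≠ 0)
    (h41 : (4 : ZMod p) ≠ 1)
    {A : SL2 p} (hA : A ∈ N) (hc : A.1 1 0 ≠ 0) :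
    ∃ mu : ZMod p, mu ≠ 0 ∧ Lm mu ∈ N := by
  have hCmem := comp hN hA hc
  set v := A.1 1 0 with hv
  set t := A.1 0 0 + A.1 1 1 with htdef
  set u := v⁻¹ with hu
  have huv : u * v = 1 := inv_mul_cancel₀ hc
  set C : SL2 p := mk2 0 (-u) v t (by linear_combination huv) with hCdef
  -- the magic matrix S = (Um u * C * (Um u)⁻¹) * C⁻¹ = [[2, u],[v, 1]]
  have hS : Um u * C * (Um u)⁻¹ * C⁻¹ = mk2 2 u v 1 (by linear_combination (-1 : ZMod p) * huv) := by
    rw [mul_inv_eq_iff_eq_mul, mul_inv_eq_iff_eq_mul]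
    rw [hCdef, Um, mk2_mul, mk2_mul, mk2_mul]
    have hvv : v⁻¹ * v = 1 := inv_mul_cancel₀ hc
    refine mk2_eq ?_ ?_ ?_ ?_ <;>
      first
        | ring1
        | linear_combination hvv
        | linear_combination (-1 : ZMod p) * hvv
        | linear_combination (2 : ZMod p) * hvv
        | linear_combination (-2 : ZMod p) * hvv
        | linear_combination v⁻¹ * hvv
        | linear_combination (-v⁻¹) * hvv
        | linear_combination (2*v⁻¹) * hvv
        | linear_combination (-2*v⁻¹) * hvv
        | linear_combination t * hvv
        | linear_combination (-t) * hvv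
        | linear_combination (t*v⁻¹) * hvv
        | linear_combination (-t*v⁻¹) * hvv
  have hSmem : mk2 2 u v 1 (by linear_combination (-1 : ZMod p) * huv) ∈ N := by
    rw [← hS]
    exact mul_mem (hN.conj_mem _ hCmem _) (inv_mem hCmem)
  have hSc : (mk2 2 u v 1 (by linear_combination (-1 : ZMod p) * huv) : SL2 p).1 1 0 ≠ 0 := by
    show v ≠ 0
    exact hc
  have hC2 := comp hN hSmem hSc
  refine tr_ne hN (inv_mul_cancel₀ hSc) hp2 h41 ?_ hC2
  show (mk2 2 u v 1 _ : SL2 p).1 0 0 + (mk2 2 u v 1 _ : SL2 p).1 1 1 ≠ 0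
  show (2 : ZMod p) + 1 ≠ 0
  exact hp3

include hN in
lemma exists_trans (hp2 : (2 : ZMod p) ≠ 0) (hp3 : (2 : ZMod p) + 1 ≠ 0)
    (h41 : (4 : ZMod p) ≠ 1)
    {A : SL2 p} (hA : A ∈ N) (hAnc : A ∉ Subgroup.center (SL2 p)) :
    ∃ mu : ZMod p, mu ≠ 0 ∧ Lm mu ∈ N := by
  set a := A.1 0 0 with hadef
  set b := A.1 0 1 with hbdef
  set c := A.1 1 0 with hcdef
  set d := A.1 1 1 with hddef
  have hdet : a * d - b * c = 1 := by
    have := A.2; rwa [Matrix.det_fin_two] at this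
  by_cases hc : c ≠ 0
  · exact key_c hN hp2 hp3 h41 hA hc
  push_neg at hc
  by_cases hb : b ≠ 0
  · -- conjugate by w to move b into the lower-left corner
    set w : SL2 p := mk2 0 (-1) 1 0 (by ring) with hw
    have hconj : w * A * w⁻¹ = mk2 d (-c) (-b) a (by linear_combination hdet) := by
      rw [mul_inv_eq_iff_eq_mul]
      rw [mk2_eta A, hw, mk2_mul, mk2_mul]
      exact mk2_eq (by ring) (by ring) (by ring) (by ring)
    have hmem : mk2 d (-c) (-b) a (by linear_combination hdet) ∈ N := by
      rw [← hconj]; exact hN.conj_mem _ hA _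
    refine key_c hN hp2 hp3 h41 hmem ?_
    show -b ≠ 0
    exact neg_ne_zero.mpr hb
  push_neg at hb
  -- diagonal case
  have had : a * d = 1 := by rw [← hdet, hb]; ring
  have hAdiag : A = mk2 a 0 0 d (by linear_combination had) := by
    conv_lhs => rw [mk2_eta A]
    exact mk2_eq hadef.symm hb hc hddef.symm
  rw [hAdiag] at hA
  refine from_P hN a 0 d had hp2 hA ?_
  intro hd1 h0
  apply hAnc
  -- A is scalar, hence central
  have haa : a = d := by
    have : a = a * (d * d) := by rw [hd1, mul_one]
    rw [this, ← mul_assoc, had, one_mul]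
  rw [Matrix.SpecialLinearGroup.mem_center_iff]
  refine ⟨d, ?_, ?_⟩
  · simpa [pow_two] using hd1
  · rw [hAdiag]
    show (Matrix.scalar (Fin 2)) d = !![a, 0; 0, d]
    rw [haa]
    ext i j
    fin_cases i <;> fin_cases j <;>
      simp [Matrix.scalar_apply, Matrix.diagonal]

end PSLaux

open PSLaux in
/-- For every prime `p ≥ 5`, the quotient of `SL₂(ℤ/pℤ)` by its center,
i.e. `PSL₂(ℤ/pℤ)`, is a simple group. -/
theorem PSL2_ZMod_p_simple (p : ℕ) (hp : p.Prime) (hp5 : 5 ≤ p) :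
    IsSimpleGroup
      (Matrix.SpecialLinearGroup (Fin 2) (ZMod p) ⧸
        Subgroup.center (Matrix.SpecialLinearGroup (Fin 2) (ZMod p))) := by
  haveI : Fact p.Prime := ⟨hp⟩
  have hp2 : (2 : ZMod p) ≠ 0 := by
    have h := lit_ne_zero (p := p) 2 (fun h => absurd (Nat.le_of_dvd (by norm_num) h) (by omega))
    intro h0; apply h; push_cast; linear_combination h0
  have hp3 : ((2 : ZMod p) + 1) ≠ 0 := by
    have := lit_ne_zero (p := p) 3 (fun h => absurd (Nat.le_of_dvd (by norm_num) h) (by omega))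
    intro h; apply this; push_cast; linear_combination h
  have h41 : (4 : ZMod p) ≠ 1 := by
    intro h
    apply hp3
    linear_combination h
  have hUnc : Um (1 : ZMod p) ∉ Subgroup.center (SL2 p) := by
    intro h
    obtain ⟨r, hr, hs⟩ := Matrix.SpecialLinearGroup.mem_center_iff.mp h
    have := congrFun (congrFun (congrArg (fun M => M) hs) 0) 1
    have h01 : (Matrix.scalar (Fin 2)) r 0 1 = 0 := by
      simp [Matrix.scalar_apply, Matrix.diagonal]
    have h11 : ((Um (1 : ZMod p)).1 : Matrix (Fin 2) (Fin 2) (ZMod p)) 0 1 = 1 := rfl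
    rw [show ((Matrix.scalar (Fin 2)) r : Matrix (Fin 2) (Fin 2) (ZMod p)) = (Um (1 : ZMod p)).1 from hs] at h01
    rw [h11] at h01
    exact one_ne_zero h01
  haveI : Nontrivial
      (Matrix.SpecialLinearGroup (Fin 2) (ZMod p) ⧸
        Subgroup.center (Matrix.SpecialLinearGroup (Fin 2) (ZMod p))) := by
    refine ⟨⟨QuotientGroup.mk (Um (1 : ZMod p)), 1, ?_⟩⟩
    intro h
    exact hUnc ((QuotientGroup.eq_one_iff _).mp h)
  refine ⟨fun H hHn => ?_⟩
  by_cases hbot : H = ⊥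
  · exact Or.inl hbot
  right
  set π := QuotientGroup.mk' (Subgroup.center (SL2 p)) with hπ
  have hsurj : Function.Surjective π := QuotientGroup.mk'_surjective _
  set N : Subgroup (SL2 p) := H.comap π with hNdef
  have hNn : N.Normal := Subgroup.Normal.comap hHn π
  -- find a noncentral element of N
  obtain ⟨x, hxH, hx1⟩ : ∃ x ∈ H, x ≠ 1 := by
    by_contra hcon
    push_neg at hcon
    exact hbot (Subgroup.eq_bot_iff_forall H |>.mpr hcon)
  obtain ⟨A, rfl⟩ := hsurj x
  have hAN : A ∈ N := Subgroup.mem_comap.mpr hxH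
  have hAnc : A ∉ Subgroup.center (SL2 p) := by
    intro h
    exact hx1 ((QuotientGroup.eq_one_iff _).mpr h)
  obtain ⟨mu, hmu, hLmu⟩ := exists_trans hNn hp2 hp3 h41 hAN hAnc
  have hLall : ∀ x, Lm x ∈ N := all_Lm mu hmu hLmu
  have hUall : ∀ x, Um x ∈ N := all_Um hNn mu hmu hLmu
  have hNtop : N = ⊤ := N_eq_top hNn hUall hLall
  have : H = Subgroup.map π N :=
    (Subgroup.map_comap_eq_self_of_surjective hsurj H).symm
  rw [this, hNtop, Subgroup.map_top_of_surjective π hsurj]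
end

section
/- The group SL₂(ℤ) admits the free presentation ⟨s, u | s⁴ = 1, u⁶ = 1, s² = u³⟩: the group defined by generators s, u subject to the relators s⁴, u⁶, s²u⁻³ is isomorphic to SL₂(ℤ) via an isomorphism sending s to S and u to U. -/
open Matrix MatrixGroups

/-- The relators `s⁴`, `u⁶`, `s²u⁻³` in the free group on two generators
(`true ↦ s`, `false ↦ u`). -/
def sl2zRels : Set (FreeGroup Bool) :=
  {(FreeGroup.of true) ^ 4, (FreeGroup.of false) ^ 6,
    (FreeGroup.of true) ^ 2 * ((FreeGroup.of false) ^ 3)⁻¹}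

namespace SL2ZPresentationAux

open ModularGroup Subgroup

/-! ### Matrix computations -/

lemma mul_entry (g h : SL(2,ℤ)) (i j : Fin 2) :
    (g * h : SL(2,ℤ)).1 i j = g.1 i 0 * h.1 0 j + g.1 i 1 * h.1 1 j := by
  rw [Matrix.SpecialLinearGroup.coe_mul, Matrix.mul_apply, Fin.sum_univ_two]

lemma det_entry (g : SL(2,ℤ)) : g.1 0 0 * g.1 1 1 - g.1 0 1 * g.1 1 0 = 1 := by
  rw [← Matrix.det_fin_two]; exact g.2

lemma coe_U : ((S * T : SL(2,ℤ)) : Matrix (Fin 2) (Fin 2) ℤ) = !![0,-1;1,1] := by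
  simp [SpecialLinearGroup.coe_mul, ModularGroup.coe_S, ModularGroup.coe_T, Matrix.mul_fin_two]

lemma Ssq : ((S : SL(2,ℤ))^2).1 = !![-1,0;0,-1] := by
  rw [pow_two, Matrix.SpecialLinearGroup.coe_mul, ModularGroup.coe_S]
  norm_num [Matrix.mul_fin_two]

lemma S4 : (S : SL(2,ℤ))^4 = 1 := by
  ext i j
  rw [show (4:ℕ) = 2*2 from rfl, pow_mul, pow_two, Matrix.SpecialLinearGroup.coe_mul, Ssq,
    Matrix.SpecialLinearGroup.coe_one]
  norm_num [Matrix.mul_fin_two]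
  fin_cases i <;> fin_cases j <;> simp [Matrix.one_apply]

lemma U3 : ((S*T : SL(2,ℤ)))^3 = S^2 := by
  ext i j
  rw [pow_succ, pow_two, Matrix.SpecialLinearGroup.coe_mul, Matrix.SpecialLinearGroup.coe_mul, coe_U, Ssq]
  norm_num [Matrix.mul_fin_two]

lemma U6 : ((S*T : SL(2,ℤ)))^6 = 1 := by
  rw [show (6:ℕ) = 3*2 from rfl, pow_mul, U3, ← pow_mul, S4]

lemma Ssq_ne_one : ((S : SL(2,ℤ))^2) ≠ 1 := by
  intro h
  have := congrArg (fun g : SL(2,ℤ) => g.1 0 0) h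
  rw [Ssq, Matrix.SpecialLinearGroup.coe_one] at this
  simp [Matrix.one_apply] at this

/-- A handy case analysis for zpowers of an element of order dividing 2. -/
lemma zpow_cases_two {G : Type*} [Group G] (a : G) (h2 : a ^ (2:ℤ) = 1) (k : ℤ) :
    a ^ k = 1 ∨ a ^ k = a := by
  have : a ^ k = a ^ (k % 2) := by
    conv_lhs => rw [← Int.mul_ediv_add_emod k 2]
    rw [_root_.zpow_add, _root_.zpow_mul, h2, _root_.one_zpow, one_mul]
  rw [this]
  have hk0 : k % 2 = 0 ∨ k % 2 = 1 := by omega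
  rcases hk0 with hk | hk <;> rw [hk] <;> simp

/-! ### Generation of `SL(2,ℤ)` by `S` and `T` -/

lemma S_entry (i j : Fin 2) : (S : SL(2,ℤ)).1 i j = !![0,-1;1,0] i j := by
  rw [ModularGroup.coe_S]

lemma Tz_entry (n : ℤ) (i j : Fin 2) : (T^n : SL(2,ℤ)).1 i j = !![1,n;0,1] i j := by
  rw [ModularGroup.coe_T_zpow]

lemma S_mul_10 (g : SL(2,ℤ)) : (S * g).1 1 0 = g.1 0 0 := by
  rw [mul_entry, S_entry, S_entry]; simp

lemma T_mul_00 (n : ℤ) (g : SL(2,ℤ)) : (T^n * g).1 0 0 = g.1 0 0 + n * g.1 1 0 := by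
  rw [mul_entry, Tz_entry, Tz_entry]; simp

lemma closure_ST : ∀ g : SL(2,ℤ), g ∈ Subgroup.closure ({S, T} : Set SL(2,ℤ)) := by
  have hS : S ∈ Subgroup.closure ({S, T} : Set SL(2,ℤ)) := subset_closure (by simp)
  have hT : T ∈ Subgroup.closure ({S, T} : Set SL(2,ℤ)) := subset_closure (by simp)
  suffices h : ∀ n : ℕ, ∀ g : SL(2,ℤ), (g.1 1 0).natAbs = n →
      g ∈ Subgroup.closure ({S, T} : Set SL(2,ℤ)) by
    intro g; exact h _ g rfl
  intro n
  induction n using Nat.strong_induction_on with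
  | _ n ih =>
    intro g hg
    rcases Nat.eq_zero_or_pos n with hn | hn
    · subst hn
      have hc : g.1 1 0 = 0 := by omega
      have hdet := det_entry g
      rw [hc] at hdet
      simp only [mul_zero, sub_zero] at hdet
      set b := g.1 0 1 with hb
      rcases Int.mul_eq_one_iff_eq_one_or_neg_one.mp hdet with ⟨h1, h2⟩ | ⟨h1, h2⟩
      · have : g = T ^ b := by
          ext i j
          rw [Tz_entry]
          have := Matrix.eta_fin_two g.1
          rw [hc, h1, h2] at this
          rw [this]
        rw [this]; exact zpow_mem hT b
      · have : g = S ^ 2 * T ^ (-b) := by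
          ext i j
          rw [mul_entry, Ssq, Tz_entry, Tz_entry]
          have := Matrix.eta_fin_two g.1
          rw [hc, h1, h2] at this
          rw [this]
          fin_cases i <;> fin_cases j <;> simp [hb]
        rw [this]
        exact mul_mem (pow_mem hS 2) (zpow_mem hT (-b))
    · have hc : g.1 1 0 ≠ 0 := by intro h0; rw [h0] at hg; simp at hg; omega
      set a := g.1 0 0 with ha
      set c := g.1 1 0 with hcdef
      set q := a / c with hq
      have key : (S * (T ^ (-q) * g)).1 1 0 = a % c := by
        rw [S_mul_10, T_mul_00, ← hcdef, ← ha, Int.emod_def, hq]; ring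
      have hbound : 0 ≤ a % c ∧ a % c < |c| := by
        refine ⟨Int.emod_nonneg a hc, ?_⟩
        rcases lt_or_gt_of_ne hc with h | h
        · rw [← Int.emod_neg]
          calc a % (-c) < -c := Int.emod_lt_of_pos a (by omega)
          _ ≤ |c| := by rw [abs_of_neg h]
        · calc a % c < c := Int.emod_lt_of_pos a h
          _ ≤ |c| := le_abs_self c
      have hlt : ((S * (T ^ (-q) * g)).1 1 0).natAbs < n := by
        rw [key, ← hg]
        have h2 := hbound
        rw [Int.abs_eq_natAbs] at h2
        omega
      have hmem := ih _ hlt _ rfl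
      have hrw : g = T ^ q * (S⁻¹ * (S * (T ^ (-q) * g))) := by group
      rw [hrw]
      exact mul_mem (zpow_mem hT q) (mul_mem (inv_mem hS) hmem)

/-! ### The Möbius action on irrational numbers -/

noncomputable def mob (g : SL(2,ℤ)) (x : ℝ) : ℝ :=
  ((g.1 0 0 : ℝ) * x + (g.1 0 1 : ℝ)) / ((g.1 1 0 : ℝ) * x + (g.1 1 1 : ℝ))

lemma denom_ne_zero (g : SL(2,ℤ)) {x : ℝ} (hx : Irrational x) :
    (g.1 1 0 : ℝ) * x + (g.1 1 1 : ℝ) ≠ 0 := by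
  intro h
  by_cases hc : g.1 1 0 = 0
  · have hR : ((g.1 1 1 : ℤ) : ℝ) = 0 := by
      rw [hc] at h; push_cast at h; linarith
    have hd : g.1 1 1 = 0 := by exact_mod_cast hR
    have hdet := det_entry g
    rw [hc, hd] at hdet
    simp at hdet
  · apply hx
    refine ⟨(-(g.1 1 1 : ℚ)) / ((g.1 1 0 : ℤ) : ℚ), ?_⟩
    have hcr : ((g.1 1 0 : ℤ) : ℝ) ≠ 0 := Int.cast_ne_zero.mpr hc
    push_cast
    field_simp
    linarith [h]

lemma mob_irrational (g : SL(2,ℤ)) {x : ℝ} (hx : Irrational x) : Irrational (mob g x) := by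
  rintro ⟨q, hq⟩
  rw [mob] at hq
  have hden := denom_ne_zero g hx
  have hdet0 : ((g.1 0 0 : ℤ):ℝ) * ((g.1 1 1 : ℤ):ℝ) - ((g.1 0 1 : ℤ):ℝ) * ((g.1 1 0 : ℤ):ℝ) = 1 := by
    exact_mod_cast det_entry g
  set a : ℝ := ((g.1 0 0 : ℤ) : ℝ) with ha
  set b : ℝ := ((g.1 0 1 : ℤ) : ℝ) with hb
  set c : ℝ := ((g.1 1 0 : ℤ) : ℝ) with hc
  set d : ℝ := ((g.1 1 1 : ℤ) : ℝ) with hd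
  rw [eq_div_iff hden] at hq
  by_cases h1 : a - (q : ℝ) * c = 0
  · have e : (a - (q:ℝ) * c) * x = (q:ℝ) * d - b := by linear_combination -hq
    rw [h1, zero_mul] at e
    have ha' : a = (q:ℝ) * c := by linarith
    have hb' : b = (q:ℝ) * d := by linarith
    rw [ha', hb'] at hdet0
    nlinarith [hdet0]
  · apply hx
    refine ⟨(q * (g.1 1 1 : ℚ) - ((g.1 0 1 : ℤ) : ℚ)) /
      (((g.1 0 0 : ℤ) : ℚ) - q * ((g.1 1 0 : ℤ) : ℚ)), ?_⟩
    have hxeq : x = ((q:ℝ) * d - b) / (a - (q:ℝ) * c) := by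
      rw [eq_div_iff h1]; linear_combination -hq
    rw [hxeq, ha, hb, hc, hd]
    have h1' : (((g.1 0 0 : ℤ) : ℚ) - q * ((g.1 1 0 : ℤ) : ℚ)) ≠ 0 := by
      intro h0
      apply h1
      rw [ha, hc]
      have : ((((g.1 0 0 : ℤ) : ℚ) - q * ((g.1 1 0 : ℤ) : ℚ) : ℚ) : ℝ) = 0 := by rw [h0]; simp
      push_cast at this
      linarith
    push_cast
    ring

lemma mob_mul (g h : SL(2,ℤ)) {x : ℝ} (hx : Irrational x) :
    mob (g * h) x = mob g (mob h x) := by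
  have hdh := denom_ne_zero h hx
  have hdgh := denom_ne_zero (g*h) hx
  have hdg := denom_ne_zero g (mob_irrational h hx)
  rw [mob] at hdg
  have e10 : (((g*h).1 1 0 : ℤ) : ℝ)
      = (g.1 1 0 : ℝ) * (h.1 0 0 : ℝ) + (g.1 1 1 : ℝ) * (h.1 1 0 : ℝ) := by
    rw [mul_entry]; push_cast; ring
  have e11 : (((g*h).1 1 1 : ℤ) : ℝ)
      = (g.1 1 0 : ℝ) * (h.1 0 1 : ℝ) + (g.1 1 1 : ℝ) * (h.1 1 1 : ℝ) := by
    rw [mul_entry]; push_cast; ring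
  have e00 : (((g*h).1 0 0 : ℤ) : ℝ)
      = (g.1 0 0 : ℝ) * (h.1 0 0 : ℝ) + (g.1 0 1 : ℝ) * (h.1 1 0 : ℝ) := by
    rw [mul_entry]; push_cast; ring
  have e01 : (((g*h).1 0 1 : ℤ) : ℝ)
      = (g.1 0 0 : ℝ) * (h.1 0 1 : ℝ) + (g.1 0 1 : ℝ) * (h.1 1 1 : ℝ) := by
    rw [mul_entry]; push_cast; ring
  simp only [mob]
  rw [div_eq_div_iff hdgh hdg]
  rw [e00, e01, e10, e11]
  field_simp
  ring

/-- The irrational real numbers. -/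
def Irr : Type := {x : ℝ // Irrational x}

noncomputable instance : MulAction SL(2,ℤ) Irr where
  smul g x := ⟨mob g x.1, mob_irrational g x.2⟩
  one_smul x := by
    apply Subtype.ext
    show mob 1 x.1 = x.1
    rw [mob]
    simp [SpecialLinearGroup.coe_one, Matrix.one_apply]
  mul_smul g h x := by
    apply Subtype.ext
    exact mob_mul g h x.2

noncomputable def act : SL(2,ℤ) →* Equiv.Perm Irr := MulAction.toPermHom SL(2,ℤ) Irr

lemma act_apply (g : SL(2,ℤ)) (x : Irr) : (act g x).1 = mob g x.1 := rfl

lemma mob_U (x : ℝ) : mob (S * T) x = -1 / (x + 1) := by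
  rw [mob, show ((S*T : SL(2,ℤ)).1 : Matrix (Fin 2) (Fin 2) ℤ) = !![0,-1;1,1] from coe_U]
  norm_num

lemma mob_S (x : ℝ) : mob S x = -1 / x := by
  rw [mob, show ((S : SL(2,ℤ)).1 : Matrix (Fin 2) (Fin 2) ℤ) = !![0,-1;1,0]
    from ModularGroup.coe_S]
  norm_num

lemma mob_U_neg (x : ℝ) (h : 0 < x) : -1 < mob (S*T) x ∧ mob (S*T) x < 0 := by
  rw [mob_U]
  constructor
  · rw [neg_div]
    have : 1 / (x+1) < 1 := by
      rw [div_lt_one (by linarith)]; linarith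
    linarith
  · apply div_neg_of_neg_of_pos <;> [norm_num; linarith]

lemma mob_U_neg' (x : ℝ) (h : -1 < x) (h2 : x < 0) : mob (S*T) x < 0 := by
  rw [mob_U]
  apply div_neg_of_neg_of_pos <;> [norm_num; linarith]

lemma mob_S_pos (x : ℝ) (h : x < 0) : 0 < mob S x := by
  rw [mob_S, neg_div]
  have : 1 / x < 0 := div_neg_of_pos_of_neg one_pos h
  linarith

noncomputable abbrev σS : Equiv.Perm Irr := act S
noncomputable abbrev σU : Equiv.Perm Irr := act (S*T)

lemma act_neg_one : act ((S : SL(2,ℤ))^2) = 1 := by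
  ext x
  apply Subtype.ext
  show mob (S^2) x.1 = x.1
  rw [mob, show ((S^2 : SL(2,ℤ)).1 : Matrix (Fin 2) (Fin 2) ℤ) = !![-1,0;0,-1] from Ssq]
  norm_num

lemma σS_sq : σS ^ 2 = 1 := by rw [← map_pow, act_neg_one]
lemma σU_cube : σU ^ 3 = 1 := by rw [← map_pow, U3, act_neg_one]

noncomputable def x0 : Irr := ⟨Real.sqrt 2, irrational_sqrt_two⟩

lemma x0_pos : 0 < x0.1 := Real.sqrt_pos.mpr (by norm_num)

lemma σU_apply_x0 : -1 < (σU x0).1 ∧ (σU x0).1 < 0 := by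
  rw [act_apply]; exact mob_U_neg _ x0_pos

lemma σU_ne_one : σU ≠ 1 := by
  intro h
  have h2 : (σU x0).1 = x0.1 := by rw [h]; rfl
  have := σU_apply_x0
  have := x0_pos
  linarith [this]

lemma σU_sq_ne_one : σU ^ 2 ≠ 1 := by
  intro h
  have h2 : (σU (σU x0)).1 = x0.1 := by
    have : (σU ^ 2) x0 = x0 := by rw [h]; rfl
    rw [pow_two] at this
    exact congrArg Subtype.val this
  have ha := σU_apply_x0
  have hb : (σU (σU x0)).1 < 0 := by
    rw [act_apply]; exact mob_U_neg' _ ha.1 ha.2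
  have := x0_pos
  linarith

lemma σS_ne_one : σS ≠ 1 := by
  intro h
  set y : Irr := ⟨-Real.sqrt 2, (irrational_sqrt_two.neg)⟩ with hy
  have h2 : (σS y).1 = y.1 := by rw [h]; rfl
  have hpos : 0 < (σS y).1 := by
    rw [act_apply]
    apply mob_S_pos
    simp [hy]
  rw [h2] at hpos
  have := Real.sqrt_pos.mpr (show (0:ℝ) < 2 by norm_num)
  rw [hy] at hpos
  simp only at hpos
  linarith

lemma zpowers_S_cases (h : Equiv.Perm Irr) (hh : h ∈ zpowers σS) : h = 1 ∨ h = σS := by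
  obtain ⟨k, hk⟩ := hh
  simp only at hk
  subst hk
  exact zpow_cases_two σS (by exact_mod_cast σS_sq) k

lemma zpowers_U_cases (h : Equiv.Perm Irr) (hh : h ∈ zpowers σU) :
    h = 1 ∨ h = σU ∨ h = σU ^ 2 := by
  obtain ⟨k, hk⟩ := hh
  simp only at hk
  subst hk
  have h3 : σU ^ (3 : ℤ) = 1 := by exact_mod_cast σU_cube
  have : σU ^ k = σU ^ (k % 3) := by
    conv_lhs => rw [← Int.mul_ediv_add_emod k 3]
    rw [_root_.zpow_add, _root_.zpow_mul, h3, _root_.one_zpow, one_mul]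
  rw [this]
  have hk0 : k % 3 = 0 ∨ k % 3 = 1 ∨ k % 3 = 2 := by omega
  rcases hk0 with hk | hk | hk <;> rw [hk]
  · simp
  · simp
  · right; right; rw [show (2:ℤ) = ((2:ℕ):ℤ) from rfl, zpow_natCast]

/-- Distinctness of the first three powers of an element with `a ≠ 1`, `a² ≠ 1`. -/
lemma order3_inj {G : Type*} [Group G] (a : G) (h1 : a ≠ 1) (h2 : a^2 ≠ 1) (i j : Fin 3)
    (h : a^(i:ℕ) = a^(j:ℕ)) : i = j := by
  have haa : a^2 ≠ a := fun hq => h1 (mul_left_cancel (a := a) (by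
    rw [← pow_two (a := a), hq, mul_one]))
  fin_cases i <;> fin_cases j <;> norm_num at h ⊢ <;>
    first
      | rfl
      | exact absurd h h1
      | exact absurd h.symm h1
      | exact absurd h h2
      | exact absurd h.symm h2
      | exact absurd h haa
      | exact absurd h.symm haa

/-! ### Ping-pong -/

noncomputable def K : Bool → Subgroup (Equiv.Perm Irr) :=
  fun b => cond b (zpowers σS) (zpowers σU)

noncomputable def fK : ∀ b, (K b) →* Equiv.Perm Irr := fun b => (K b).subtype

noncomputable def XX : Bool → Set Irr := fun b => cond b {x | 0 < x.1} {x | x.1 < 0}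

lemma lift_inj : Function.Injective (Monoid.CoprodI.lift fK) := by
  apply Monoid.CoprodI.lift_injective_of_ping_pong fK _ XX
  · intro b
    cases b
    · refine ⟨⟨-x0.1, x0.2.neg⟩, ?_⟩
      show (-x0.1) < 0
      simpa using x0_pos
    · exact ⟨x0, x0_pos⟩
  · intro i j hij
    cases i <;> cases j <;> simp only [Function.onFun] at hij ⊢ <;>
      first
        | exact absurd rfl hij
        | · rw [Set.disjoint_left]
            intro x hx hx'
            simp only [XX, cond, Set.mem_setOf_eq] at hx hx'
            linarith
  · intro i j hij
    cases i <;> cases j <;> try simp at hij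
    · intro h hne
      rcases zpowers_U_cases h.1 h.2 with h1 | h1 | h1
      · exact absurd (Subtype.ext h1) hne
      all_goals
        intro y hy
        rw [Set.mem_smul_set] at hy
        obtain ⟨x, hx, rfl⟩ := hy
        simp only [XX] at hx ⊢
        have hp : 0 < x.1 := hx
        show ((fK false h) • x).1 < 0
        rw [show fK false h = h.1 from rfl, h1]
      · show (σU x).1 < 0
        rw [act_apply]
        exact (mob_U_neg _ hp).2
      · show ((σU ^2) x).1 < 0
        rw [pow_two]
        show (σU (σU x)).1 < 0
        have ha : -1 < (σU x).1 ∧ (σU x).1 < 0 := by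
          rw [act_apply]; exact mob_U_neg _ hp
        rw [act_apply]
        exact mob_U_neg' _ ha.1 ha.2
    · intro h hne
      rcases zpowers_S_cases h.1 h.2 with h1 | h1
      · exact absurd (Subtype.ext h1) hne
      intro y hy
      rw [Set.mem_smul_set] at hy
      obtain ⟨x, hx, rfl⟩ := hy
      simp only [XX] at hx ⊢
      show 0 < ((fK true h) • x).1
      rw [show fK true h = h.1 from rfl, h1]
      show 0 < (σS x).1
      rw [act_apply]
      exact mob_S_pos _ hx
  · right
    refine ⟨false, ?_⟩
    have einj : Function.Injective
        (fun i : Fin 3 => (⟨σU, Subgroup.mem_zpowers σU⟩ : K false) ^ (i : ℕ)) := by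
      intro i j hij
      have hv : σU ^ (i : ℕ) = σU ^ (j : ℕ) := by
        have := congrArg Subtype.val hij
        simpa [SubmonoidClass.coe_pow] using this
      exact order3_inj σU σU_ne_one σU_sq_ne_one i j hv
    calc (3 : Cardinal) = Cardinal.mk (Fin 3) := by simp
    _ ≤ Cardinal.mk (K false) := Cardinal.mk_le_of_injective einj

/-! ### The homomorphism `ψ` and its surjectivity -/

def fgen : Bool → SL(2,ℤ) := fun b => cond b S (S*T)

lemma rels_check : ∀ r ∈ sl2zRels, FreeGroup.lift fgen r = 1 := by
  intro r hr
  rcases hr with rfl | rfl | rfl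
  · rw [map_pow, FreeGroup.lift_apply_of]
    exact S4
  · rw [map_pow, FreeGroup.lift_apply_of]
    exact U6
  · rw [_root_.map_mul, map_inv, map_pow, map_pow, FreeGroup.lift_apply_of, FreeGroup.lift_apply_of]
    show (S:SL(2,ℤ))^2 * ((S*T)^3)⁻¹ = 1
    rw [U3]
    group

noncomputable def ψ : PresentedGroup sl2zRels →* SL(2,ℤ) := PresentedGroup.toGroup rels_check

lemma ψ_of_true : ψ (PresentedGroup.of true) = S := PresentedGroup.toGroup.of rels_check
lemma ψ_of_false : ψ (PresentedGroup.of false) = S * T := PresentedGroup.toGroup.of rels_check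

lemma ψ_surjective : Function.Surjective ψ := by
  intro g
  have hg := closure_ST g
  have hle : Subgroup.closure ({S, T} : Set SL(2,ℤ)) ≤ ψ.range := by
    rw [Subgroup.closure_le]
    rintro x (rfl | rfl)
    · exact ⟨PresentedGroup.of true, ψ_of_true⟩
    · refine ⟨(PresentedGroup.of true)⁻¹ * PresentedGroup.of false, ?_⟩
      rw [_root_.map_mul, map_inv, ψ_of_true, ψ_of_false]
      group
  exact hle hg

/-! ### Relations in the presented group -/

lemma rel_of_mem {r : FreeGroup Bool} (hr : r ∈ sl2zRels) :
    PresentedGroup.mk sl2zRels r = 1 := by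
  rw [show PresentedGroup.mk sl2zRels r = QuotientGroup.mk r from rfl]
  exact (QuotientGroup.eq_one_iff r).mpr (Subgroup.subset_normalClosure hr)

noncomputable abbrev sG : PresentedGroup sl2zRels := PresentedGroup.of true
noncomputable abbrev uG : PresentedGroup sl2zRels := PresentedGroup.of false
noncomputable abbrev zG : PresentedGroup sl2zRels := sG ^ 2

lemma s_pow_four : sG ^ 4 = 1 := by
  have := rel_of_mem (Set.mem_insert _ _)
  rw [map_pow] at this
  exact this

lemma u_pow_six : uG ^ 6 = 1 := by
  have := rel_of_mem (show (FreeGroup.of false) ^ 6 ∈ sl2zRels by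
    right; left; rfl)
  rw [map_pow] at this
  exact this

lemma s_sq_eq_u_cube : sG ^ 2 = uG ^ 3 := by
  have := rel_of_mem (show (FreeGroup.of true) ^ 2 * ((FreeGroup.of false) ^ 3)⁻¹ ∈ sl2zRels by
    right; right; rfl)
  rw [_root_.map_mul, map_inv, map_pow, map_pow] at this
  exact (mul_inv_eq_one.mp this)

lemma z_sq : zG ^ 2 = 1 := by
  rw [show zG ^ 2 = sG ^ 4 by group]
  exact s_pow_four

lemma z_central : ∀ x : PresentedGroup sl2zRels, x * zG = zG * x := by
  intro x
  have : x ∈ Subgroup.centralizer {zG} := by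
    apply PresentedGroup.generated_by
    intro j
    rw [Subgroup.mem_centralizer_iff]
    rintro h (rfl : h = zG)
    cases j
    · -- u
      show zG * uG = uG * zG
      rw [show zG = uG ^ 3 from s_sq_eq_u_cube]
      rw [← pow_succ, ← pow_succ']
    · -- s
      show zG * sG = sG * zG
      show sG^2 * sG = sG * sG^2
      rw [← pow_succ, ← pow_succ']
  rw [Subgroup.mem_centralizer_iff] at this
  exact (this zG rfl).symm

instance : (zpowers zG).Normal := by
  constructor
  rintro n ⟨k, rfl⟩ g
  simp only
  refine ⟨k, ?_⟩
  have hc : Commute zG g := (z_central g).symm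
  have := (hc.zpow_left k).eq
  rw [← this]
  group

/-! ### Lifting from zpowers -/

noncomputable def zpowersLift {G H : Type*} [Group G] [Group H] (g : G) (h : H)
    (key : ∀ k : ℤ, g ^ k = 1 → h ^ k = 1) : zpowers g →* H where
  toFun x := h ^ (Classical.choose (Subgroup.mem_zpowers_iff.mp x.2))
  map_one' := by
    have hs := Classical.choose_spec (Subgroup.mem_zpowers_iff.mp (1 : zpowers g).2)
    exact key _ hs
  map_mul' x y := by
    have hx := Classical.choose_spec (Subgroup.mem_zpowers_iff.mp x.2)
    have hy := Classical.choose_spec (Subgroup.mem_zpowers_iff.mp y.2)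
    have hxy := Classical.choose_spec (Subgroup.mem_zpowers_iff.mp (x * y).2)
    set kx := Classical.choose (Subgroup.mem_zpowers_iff.mp x.2)
    set ky := Classical.choose (Subgroup.mem_zpowers_iff.mp y.2)
    set kxy := Classical.choose (Subgroup.mem_zpowers_iff.mp (x * y).2)
    have hval : ((x * y : zpowers g) : G) = (x : G) * (y : G) := rfl
    have hg : g ^ (kxy - (kx + ky)) = 1 := by
      rw [_root_.zpow_sub, hxy, hval, ← hx, ← hy, _root_.zpow_add]
      group
    have := key _ hg
    rw [_root_.zpow_sub, _root_.zpow_add] at this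
    have h2 : h ^ kxy = h ^ kx * h ^ ky := by
      have := mul_inv_eq_one.mp this
      rw [this]
    exact h2
  
lemma zpowersLift_gen {G H : Type*} [Group G] [Group H] (g : G) (h : H)
    (key : ∀ k : ℤ, g ^ k = 1 → h ^ k = 1) :
    zpowersLift g h key ⟨g, mem_zpowers g⟩ = h := by
  show h ^ (Classical.choose (Subgroup.mem_zpowers_iff.mp (mem_zpowers g))) = h
  have hs := Classical.choose_spec (Subgroup.mem_zpowers_iff.mp (mem_zpowers g))
  set k := Classical.choose (Subgroup.mem_zpowers_iff.mp (mem_zpowers g))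
  have hk : g ^ (k - 1) = 1 := by
    rw [_root_.zpow_sub, hs]
    group
  have := key _ hk
  rw [_root_.zpow_sub] at this
  have h2 : h ^ k = h ^ (1:ℤ) := by
    have := mul_inv_eq_one.mp this
    rw [this]
  rw [h2]
  group

end SL2ZPresentationAux

namespace SL2ZPresentationAux

open Monoid Subgroup ModularGroup

/-! ### The map to the free product and the quotient comparison -/

noncomputable def gen : ∀ b : Bool, ↥(K b) :=
  fun b => Bool.rec (motive := fun b => ↥(K b))
    ⟨σU, Subgroup.mem_zpowers σU⟩ ⟨σS, Subgroup.mem_zpowers σS⟩ b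

lemma genS_sq : (gen true) ^ 2 = 1 := by
  apply Subtype.ext
  show σS ^ 2 = 1
  exact σS_sq

lemma genU_cube : (gen false) ^ 3 = 1 := by
  apply Subtype.ext
  show σU ^ 3 = 1
  exact σU_cube

lemma μrels_check : ∀ r ∈ sl2zRels,
    FreeGroup.lift (fun b => CoprodI.of (M := fun b => ↥(K b)) (gen b)) r = 1 := by
  intro r hr
  rcases hr with rfl | rfl | rfl
  · rw [_root_.map_pow, FreeGroup.lift_apply_of, ← _root_.map_pow]
    rw [show (4:ℕ) = 2*2 from rfl, pow_mul, genS_sq, one_pow, _root_.map_one]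
  · rw [_root_.map_pow, FreeGroup.lift_apply_of, ← _root_.map_pow]
    rw [show (6:ℕ) = 3*2 from rfl, pow_mul, genU_cube, one_pow, _root_.map_one]
  · rw [_root_.map_mul, map_inv, _root_.map_pow, _root_.map_pow,
      FreeGroup.lift_apply_of, FreeGroup.lift_apply_of, ← _root_.map_pow, ← _root_.map_pow,
      genS_sq, genU_cube, _root_.map_one]
    simp

noncomputable def μ : PresentedGroup sl2zRels →* CoprodI (fun b => ↥(K b)) :=
  PresentedGroup.toGroup μrels_check

/-! ### The quotient by the center -/

noncomputable abbrev Q := PresentedGroup sl2zRels ⧸ zpowers zG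
noncomputable abbrev mkQ : PresentedGroup sl2zRels →* Q := QuotientGroup.mk' (zpowers zG)
noncomputable abbrev sQ : Q := mkQ sG
noncomputable abbrev uQ : Q := mkQ uG

lemma sQ_sq : sQ ^ (2:ℤ) = 1 := by
  rw [show (2:ℤ) = ((2:ℕ):ℤ) from rfl, zpow_natCast, ← _root_.map_pow]
  exact (QuotientGroup.eq_one_iff _).mpr (mem_zpowers zG)

lemma uQ_cube : uQ ^ (3:ℤ) = 1 := by
  rw [show (3:ℤ) = ((3:ℕ):ℤ) from rfl, zpow_natCast, ← _root_.map_pow]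
  apply (QuotientGroup.eq_one_iff _).mpr
  rw [← s_sq_eq_u_cube]
  exact mem_zpowers zG

instance : Fact (Nat.Prime 2) := ⟨by norm_num⟩
instance : Fact (Nat.Prime 3) := ⟨by norm_num⟩

lemma keyS : ∀ k : ℤ, σS ^ k = 1 → sQ ^ k = 1 := by
  intro k hk
  have hord : orderOf σS = 2 := orderOf_eq_prime σS_sq σS_ne_one
  have hdvd : ((2:ℕ):ℤ) ∣ k := by
    rw [← hord]
    exact orderOf_dvd_iff_zpow_eq_one.mpr hk
  obtain ⟨m, rfl⟩ := hdvd
  rw [_root_.zpow_mul]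
  rw [show (((2:ℕ):ℤ)) = (2:ℤ) from rfl, sQ_sq, _root_.one_zpow]

lemma keyU : ∀ k : ℤ, σU ^ k = 1 → uQ ^ k = 1 := by
  intro k hk
  have hord : orderOf σU = 3 := orderOf_eq_prime σU_cube σU_ne_one
  have hdvd : ((3:ℕ):ℤ) ∣ k := by
    rw [← hord]
    exact orderOf_dvd_iff_zpow_eq_one.mpr hk
  obtain ⟨m, rfl⟩ := hdvd
  rw [_root_.zpow_mul]
  rw [show (((3:ℕ):ℤ)) = (3:ℤ) from rfl, uQ_cube, _root_.one_zpow]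

noncomputable def νf : ∀ b : Bool, (K b) →* Q :=
  fun b => Bool.rec (motive := fun b => ↥(K b) →* Q)
    (zpowersLift σU uQ keyU) (zpowersLift σS sQ keyS) b

noncomputable def ν : CoprodI (fun b => ↥(K b)) →* Q := CoprodI.lift νf

lemma hν : ν.comp μ = mkQ := by
  apply PresentedGroup.ext
  intro b
  cases b
  · show ν (μ (PresentedGroup.of false)) = uQ
    rw [show μ (PresentedGroup.of false) = CoprodI.of (M := fun b => ↥(K b)) (gen false)
      from PresentedGroup.toGroup.of μrels_check]
    rw [show ν (CoprodI.of (M := fun b => ↥(K b)) (gen false)) = νf false (gen false) from CoprodI.lift_of νf _]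
    exact zpowersLift_gen σU uQ keyU
  · show ν (μ (PresentedGroup.of true)) = sQ
    rw [show μ (PresentedGroup.of true) = CoprodI.of (M := fun b => ↥(K b)) (gen true)
      from PresentedGroup.toGroup.of μrels_check]
    rw [show ν (CoprodI.of (M := fun b => ↥(K b)) (gen true)) = νf true (gen true) from CoprodI.lift_of νf _]
    exact zpowersLift_gen σS sQ keyS

lemma hlam : (CoprodI.lift fK).comp μ = act.comp ψ := by
  apply PresentedGroup.ext
  intro b
  cases b
  · show CoprodI.lift fK (μ (PresentedGroup.of false)) = act (ψ (PresentedGroup.of false))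
    rw [show μ (PresentedGroup.of false) = CoprodI.of (M := fun b => ↥(K b)) (gen false)
      from PresentedGroup.toGroup.of μrels_check, ψ_of_false]
    rw [show CoprodI.lift fK (CoprodI.of (M := fun b => ↥(K b)) (gen false)) = fK false (gen false)
      from CoprodI.lift_of fK _]
    rfl
  · show CoprodI.lift fK (μ (PresentedGroup.of true)) = act (ψ (PresentedGroup.of true))
    rw [show μ (PresentedGroup.of true) = CoprodI.of (M := fun b => ↥(K b)) (gen true)
      from PresentedGroup.toGroup.of μrels_check, ψ_of_true]
    rw [show CoprodI.lift fK (CoprodI.of (M := fun b => ↥(K b)) (gen true)) = fK true (gen true)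
      from CoprodI.lift_of fK _]
    rfl

lemma ψ_injective : Function.Injective ψ := by
  apply (injective_iff_map_eq_one ψ).mpr
  intro g hg
  have e1 : CoprodI.lift fK (μ g) = act (ψ g) := DFunLike.congr_fun hlam g
  rw [hg, _root_.map_one] at e1
  have e2 : μ g = 1 := lift_inj (by rw [e1, _root_.map_one])
  have e3 : mkQ g = 1 := by
    have := DFunLike.congr_fun hν g
    simp only [MonoidHom.comp_apply] at this
    rw [← this, e2, _root_.map_one]
  have e4 : g ∈ zpowers zG := (QuotientGroup.eq_one_iff g).mp e3
  obtain ⟨k, hk⟩ := e4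
  simp only at hk
  subst hk
  rcases zpow_cases_two zG (by exact_mod_cast z_sq) k with h | h
  · exact h
  · exfalso
    rw [h] at hg
    apply Ssq_ne_one
    rw [← hg]
    show S^2 = ψ (sG^2)
    rw [_root_.map_pow, ψ_of_true]

end SL2ZPresentationAux

/-- `SL₂(ℤ)` has the presentation `⟨s, u | s⁴ = 1, u⁶ = 1, s² = u³⟩`, via an
isomorphism sending `s` to `S` and `u` to `U = S·T`. -/
theorem SL2Z_presentation :
    ∃ φ : PresentedGroup sl2zRels ≃* SL(2, ℤ),
      φ (PresentedGroup.of true) = ModularGroup.S ∧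
      φ (PresentedGroup.of false) = ModularGroup.S * ModularGroup.T := by
  refine ⟨MulEquiv.ofBijective SL2ZPresentationAux.ψ
    ⟨SL2ZPresentationAux.ψ_injective, SL2ZPresentationAux.ψ_surjective⟩, ?_, ?_⟩
  · exact SL2ZPresentationAux.ψ_of_true
  · exact SL2ZPresentationAux.ψ_of_false
end

section
/- In G = SL₂(ℤ) with 𝒰 = ⟨U⟩ the cyclic subgroup generated by U: the left cosets satisfy S𝒰 = T𝒰, U·S𝒰 = S·T·S𝒰, and U²·S𝒰 = T⁻¹𝒰; the four cosets 𝒰, S𝒰, US𝒰, U²S𝒰 are pairwise distinct; and the double coset 𝒰S𝒰 = {u·S·u' : u, u' ∈ 𝒰} is exactly the union of the three left cosets S𝒰 ∪ US𝒰 ∪ U²S𝒰. -/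
open Matrix MatrixGroups ModularGroup
open scoped Pointwise

local notation "S" => ModularGroup.S
local notation "T" => ModularGroup.T
local notation "U" => ModularGroup.S * ModularGroup.T

private lemma hU6 : U ^ 6 = 1 := Subtype.ext (by decide)

private lemma mem_zpU {x : SL(2,ℤ)} :
    x ∈ Subgroup.zpowers U ↔
      x = 1 ∨ x = U ∨ x = U^2 ∨ x = U^3 ∨ x = U^4 ∨ x = U^5 := by
  constructor
  · rintro ⟨n, hn⟩
    rw [← hn]; beta_reduce
    have h6 : U ^ (6:ℤ) = 1 := by
      rw [show (6:ℤ) = ((6:ℕ):ℤ) from rfl, zpow_natCast, hU6]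
    have key : U ^ n = U ^ (n % 6) := by
      conv_lhs => rw [← Int.emod_add_mul_ediv n 6]
      rw [_root_.zpow_add, _root_.zpow_mul, h6, _root_.one_zpow, mul_one]
    have h0 : 0 ≤ n % 6 := Int.emod_nonneg n (by norm_num)
    have h1 : n % 6 < 6 := Int.emod_lt_of_pos n (by norm_num)
    rw [key]
    set r := n % 6 with hr
    clear_value r
    interval_cases r <;> norm_num [zpow_ofNat]
  · rintro (rfl|rfl|rfl|rfl|rfl|rfl)
    exacts [one_mem _, Subgroup.mem_zpowers U, pow_mem (Subgroup.mem_zpowers U) 2,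
      pow_mem (Subgroup.mem_zpowers U) 3, pow_mem (Subgroup.mem_zpowers U) 4,
      pow_mem (Subgroup.mem_zpowers U) 5]

private lemma coset_ne {a b : SL(2,ℤ)}
    (h : ∀ k : Fin 6, b ≠ a * U ^ (k : ℕ)) :
    a • ((Subgroup.zpowers U : Subgroup SL(2,ℤ)) : Set SL(2,ℤ)) ≠
      b • ((Subgroup.zpowers U : Subgroup SL(2,ℤ)) : Set SL(2,ℤ)) := by
  intro hEq
  have hb : b ∈ a • ((Subgroup.zpowers U : Subgroup SL(2,ℤ)) : Set SL(2,ℤ)) := by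
    rw [hEq, mem_leftCoset_iff]
    simpa using one_mem (Subgroup.zpowers U)
  rw [mem_leftCoset_iff, SetLike.mem_coe, mem_zpU] at hb
  rcases hb with h'|h'|h'|h'|h'|h' <;>
    rw [inv_mul_eq_iff_eq_mul] at h'
  · exact h 0 (by simpa using h')
  · exact h 1 (by simpa using h')
  · exact h 2 h'
  · exact h 3 h'
  · exact h 4 h'
  · exact h 5 h'

/-- Coset identities in `SL₂(ℤ)` for `𝒰 = ⟨U⟩`, `U = S·T`:
`S𝒰 = T𝒰`, `US𝒰 = STS𝒰`, `U²S𝒰 = T⁻¹𝒰`; the four cosets `𝒰`, `S𝒰`, `US𝒰`,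
`U²S𝒰` are pairwise distinct; and the double coset `𝒰S𝒰` is the union
`S𝒰 ∪ US𝒰 ∪ U²S𝒰`. -/
theorem SL2Z_cubic_tree_cosets :
    (S • ((Subgroup.zpowers U : Subgroup SL(2, ℤ)) : Set SL(2, ℤ)) =
      T • ((Subgroup.zpowers U : Subgroup SL(2, ℤ)) : Set SL(2, ℤ))) ∧
    ((U * S) • ((Subgroup.zpowers U : Subgroup SL(2, ℤ)) : Set SL(2, ℤ)) =
      (S * T * S) • ((Subgroup.zpowers U : Subgroup SL(2, ℤ)) : Set SL(2, ℤ))) ∧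
    ((U ^ 2 * S) • ((Subgroup.zpowers U : Subgroup SL(2, ℤ)) : Set SL(2, ℤ)) =
      T⁻¹ • ((Subgroup.zpowers U : Subgroup SL(2, ℤ)) : Set SL(2, ℤ))) ∧
    (List.Pairwise (· ≠ ·)
      [((Subgroup.zpowers U : Subgroup SL(2, ℤ)) : Set SL(2, ℤ)),
        S • ((Subgroup.zpowers U : Subgroup SL(2, ℤ)) : Set SL(2, ℤ)),
        (U * S) • ((Subgroup.zpowers U : Subgroup SL(2, ℤ)) : Set SL(2, ℤ)),
        (U ^ 2 * S) • ((Subgroup.zpowers U : Subgroup SL(2, ℤ)) : Set SL(2, ℤ))]) ∧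
    ({g : SL(2, ℤ) | ∃ u ∈ Subgroup.zpowers U, ∃ u' ∈ Subgroup.zpowers U,
        g = u * S * u'} =
      S • ((Subgroup.zpowers U : Subgroup SL(2, ℤ)) : Set SL(2, ℤ)) ∪
      (U * S) • ((Subgroup.zpowers U : Subgroup SL(2, ℤ)) : Set SL(2, ℤ)) ∪
      (U ^ 2 * S) • ((Subgroup.zpowers U : Subgroup SL(2, ℤ)) : Set SL(2, ℤ))) := by
  refine ⟨?_, ?_, ?_, ?_, ?_⟩
  · -- S𝒰 = T𝒰
    rw [leftCoset_eq_iff]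
    have : S⁻¹ * T = U ^ 4 := by
      rw [inv_mul_eq_iff_eq_mul]; exact Subtype.ext (by decide)
    rw [this]
    exact pow_mem (Subgroup.mem_zpowers U) 4
  · -- US𝒰 = STS𝒰
    rfl
  · -- U²S𝒰 = T⁻¹𝒰
    rw [leftCoset_eq_iff]
    have : (U ^ 2 * S)⁻¹ * T⁻¹ = U ^ 3 := by
      rw [inv_mul_eq_iff_eq_mul]; exact Subtype.ext (by decide)
    rw [this]
    exact pow_mem (Subgroup.mem_zpowers U) 3
  · -- pairwise distinct
    have base : ∀ b : SL(2,ℤ), (∀ k : Fin 6, b ≠ 1 * U ^ (k:ℕ)) →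
        ((Subgroup.zpowers U : Subgroup SL(2,ℤ)) : Set SL(2,ℤ)) ≠
          b • ((Subgroup.zpowers U : Subgroup SL(2,ℤ)) : Set SL(2,ℤ)) := by
      intro b hb h
      refine coset_ne hb ?_
      rw [← h, one_smul]
    have hd : ∀ (a b : SL(2,ℤ)), (∀ k : Fin 6, b ≠ a * U ^ (k:ℕ)) →
        a • ((Subgroup.zpowers U : Subgroup SL(2,ℤ)) : Set SL(2,ℤ)) ≠
          b • ((Subgroup.zpowers U : Subgroup SL(2,ℤ)) : Set SL(2,ℤ)) :=
      fun a b h => coset_ne h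
    refine List.Pairwise.cons ?_ (List.Pairwise.cons ?_ (List.Pairwise.cons ?_ (List.pairwise_singleton _ _)))
    · intro x hx
      fin_cases hx
      · exact base _ (by intro k; fin_cases k <;> exact fun h => absurd (congrArg Subtype.val h) (by decide))
      · exact base _ (by intro k; fin_cases k <;> exact fun h => absurd (congrArg Subtype.val h) (by decide))
      · exact base _ (by intro k; fin_cases k <;> exact fun h => absurd (congrArg Subtype.val h) (by decide))
    · intro x hx
      fin_cases hx
      · exact hd _ _ (by intro k; fin_cases k <;> exact fun h => absurd (congrArg Subtype.val h) (by decide))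
      · exact hd _ _ (by intro k; fin_cases k <;> exact fun h => absurd (congrArg Subtype.val h) (by decide))
    · intro x hx
      fin_cases hx
      exact hd _ _ (by intro k; fin_cases k <;> exact fun h => absurd (congrArg Subtype.val h) (by decide))
  · -- double coset
    ext g
    simp only [Set.mem_setOf_eq, Set.mem_union]
    constructor
    · rintro ⟨u, hu, u', hu', rfl⟩
      rw [mem_zpU] at hu
      have hc : U ^ 3 * S = S * U ^ 3 := Subtype.ext (by decide)
      rcases hu with rfl|rfl|rfl|rfl|rfl|rfl
      · exact Or.inl (Or.inl (by
          rw [mem_leftCoset_iff, SetLike.mem_coe]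
          simpa [mul_assoc] using hu'))
      · exact Or.inl (Or.inr (by
          rw [mem_leftCoset_iff, SetLike.mem_coe]
          simpa [mul_assoc] using hu'))
      · exact Or.inr (by
          rw [mem_leftCoset_iff, SetLike.mem_coe]
          simpa [mul_assoc] using hu')
      · refine Or.inl (Or.inl (by
          rw [mem_leftCoset_iff, SetLike.mem_coe]
          have : S⁻¹ * (U ^ 3 * S * u') = U ^ 3 * u' := by
            rw [hc]; group
          rw [this]
          exact mul_mem (pow_mem (Subgroup.mem_zpowers U) 3) hu'))
      · refine Or.inl (Or.inr (by
          rw [mem_leftCoset_iff, SetLike.mem_coe]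
          have : (U * S)⁻¹ * (U ^ 4 * S * u') = U ^ 3 * u' := by
            have h4 : (U ^ 4 * S : SL(2,ℤ)) = U * S * U ^ 3 := by
              rw [show (U ^ 4 : SL(2,ℤ)) = U * U ^ 3 by group, mul_assoc, hc, ← mul_assoc]
            rw [h4]; group
          rw [this]
          exact mul_mem (pow_mem (Subgroup.mem_zpowers U) 3) hu'))
      · refine Or.inr (by
          rw [mem_leftCoset_iff, SetLike.mem_coe]
          have : (U ^ 2 * S)⁻¹ * (U ^ 5 * S * u') = U ^ 3 * u' := by
            have h5 : (U ^ 5 * S : SL(2,ℤ)) = U ^ 2 * S * U ^ 3 := by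
              rw [show (U ^ 5 : SL(2,ℤ)) = U ^ 2 * U ^ 3 by group, mul_assoc, hc, ← mul_assoc]
            rw [h5]; group
          rw [this]
          exact mul_mem (pow_mem (Subgroup.mem_zpowers U) 3) hu')
    · rintro ((h|h)|h)
      · rw [mem_leftCoset_iff, SetLike.mem_coe] at h
        exact ⟨1, one_mem _, S⁻¹ * g, h, by group⟩
      · rw [mem_leftCoset_iff, SetLike.mem_coe] at h
        exact ⟨U, Subgroup.mem_zpowers U, (U * S)⁻¹ * g, h, by group⟩
      · rw [mem_leftCoset_iff, SetLike.mem_coe] at h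
        exact ⟨U ^ 2, pow_mem (Subgroup.mem_zpowers U) 2, (U ^ 2 * S)⁻¹ * g, h, by group⟩
end
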